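/- arXiv:2510.14424 — 4 statements merged into one kernel-verified Lean document; each statement's English description precedes it below -/
import Mathlib

section
/- Let q ≥ 2 be a prime power. Then lim_{n→∞} binom(n, ⌊n/2⌋)_q / q^{⌊n/2⌋·⌈n/2⌉} = 1 / K_q. -/
open Filter Matrix
open scoped Topology

/-- The `q`-binomial coefficient `binom(n,k)_q = ∏_{j=0}^{k-1} (q^{n-j}-1)/(q^{k-j}-1)`. -/
noncomputable def qBinom (q n k : ℕ) : ℝ :=
  ∏ j ∈ Finset.range k, ((q : ℝ) ^ (n - j) - 1) / ((q : ℝ) ^ (k - j) - 1)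

/-- `S(n) = ∑_{k=0}^n binom(n,k)_q`. -/
noncomputable def Sq (q n : ℕ) : ℝ := ∑ k ∈ Finset.range (n + 1), qBinom q n k

/-- `K_q = ∏_{j=1}^∞ (1 - q^{-j})`. -/
noncomputable def Kq (q : ℕ) : ℝ := ∏' j : ℕ, (1 - ((q : ℝ))⁻¹ ^ (j + 1))

/-- `K_q(k) = ∏_{j=1}^{k} (1 - q^{-j})`. -/
noncomputable def KqTrunc (q k : ℕ) : ℝ := ∏ j ∈ Finset.range k, (1 - ((q : ℝ))⁻¹ ^ (j + 1))

/-- Jacobi theta constant `θ₂(w) = ∑_{k∈ℤ} w^{(k+1/2)²}`. -/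
noncomputable def theta2 (w : ℝ) : ℝ := ∑' k : ℤ, w ^ (((k : ℝ) + 1/2) ^ 2)

/-- Jacobi theta constant `θ₃(w) = ∑_{k∈ℤ} w^{k²}`. -/
noncomputable def theta3 (w : ℝ) : ℝ := ∑' k : ℤ, w ^ ((k : ℝ) ^ 2)

/-- Condition (⋆): `n²/4 − ε·n + A·√n − k(n)(n−k(n)) → −∞`. -/
def StarCond (A ε : ℝ) (k : ℕ → ℕ) : Prop :=
  Tendsto (fun n : ℕ =>
    (n : ℝ) ^ 2 / 4 - ε * n + A * Real.sqrt n - (k n : ℝ) * ((n : ℝ) - (k n : ℝ)))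
    atTop atBot

/-- The set of permutation matrices inside `GL n F`. -/
def permSet (F : Type) [Field F] (n : ℕ) : Set (GL (Fin n) F) :=
  {M | ∃ σ : Equiv.Perm (Fin n), (M : Matrix (Fin n) (Fin n) F) = σ.permMatrix F}

/-- The set of invertible diagonal matrices inside `GL n F`. -/
def diagSet (F : Type) [Field F] (n : ℕ) : Set (GL (Fin n) F) :=
  {M | ∃ d : Fin n → F, (M : Matrix (Fin n) (Fin n) F) = Matrix.diagonal d}

/-- The permutation group: subgroup of `GL n F` formed by the permutation matrices. -/
def PermGroup (F : Type) [Field F] (n : ℕ) : Subgroup (GL (Fin n) F) :=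
  Subgroup.closure (permSet F n)

/-- The monomial group: subgroup of `GL n F` generated by permutation and diagonal matrices. -/
def MonomialGroup (F : Type) [Field F] (n : ℕ) : Subgroup (GL (Fin n) F) :=
  Subgroup.closure (permSet F n ∪ diagSet F n)

/-- Number of orbits of a subgroup `G ≤ GL n F` acting on the Grassmannian of
`k`-dimensional subspaces of `F^n` (by taking images of subspaces). -/
noncomputable def numClassesDim {n : ℕ} (F : Type) [Field F]
    (G : Subgroup (GL (Fin n) F)) (k : ℕ) : ℕ :=
  Nat.card (Quot (fun V W : {V : Submodule F (Fin n → F) // Module.finrank F V = k} =>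
    ∃ M ∈ G, Submodule.map (Matrix.toLin' (M : Matrix (Fin n) (Fin n) F)) V.1 = W.1))

/-- Number of orbits of a subgroup `G ≤ GL n F` acting on the set of all subspaces of `F^n`. -/
noncomputable def numClasses {n : ℕ} (F : Type) [Field F]
    (G : Subgroup (GL (Fin n) F)) : ℕ :=
  Nat.card (Quot (fun V W : Submodule F (Fin n → F) =>
    ∃ M ∈ G, Submodule.map (Matrix.toLin' (M : Matrix (Fin n) (Fin n) F)) V = W))

/-- Semilinear orbit relation: `W` is the image of `V` under the semilinear transformation
given by applying the field automorphism `σ` componentwise followed by a monomial matrix. -/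
def semiRel (F : Type) [Field F] (n : ℕ) (V W : Submodule F (Fin n → F)) : Prop :=
  ∃ σ : F ≃+* F, ∃ M ∈ MonomialGroup F n,
    (W : Set (Fin n → F)) =
      (fun x => Matrix.mulVec (M : Matrix (Fin n) (Fin n) F) (fun i => σ (x i))) '' (V : Set (Fin n → F))

/-- Number of semilinear equivalence classes of `k`-dimensional subspaces of `F^n`. -/
noncomputable def numClassesDimSemi (F : Type) [Field F] (n k : ℕ) : ℕ :=
  Nat.card (Quot (fun V W : {V : Submodule F (Fin n → F) // Module.finrank F V = k} =>
    semiRel F n V.1 W.1))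

/-- Number of semilinear equivalence classes of subspaces of `F^n`. -/
noncomputable def numClassesSemi (F : Type) [Field F] (n : ℕ) : ℕ :=
  Nat.card (Quot (fun V W : Submodule F (Fin n → F) => semiRel F n V W))


section StmtSeven
open Real

lemma qinv_le (q : ℕ) (hc : 2 ≤ (q:ℝ)) {i : ℕ} (hi : 1 ≤ i) : ((q:ℝ))⁻¹ ^ i ≤ 1/2 := by
  have h0 : (0:ℝ) < q := by linarith
  have h1 : ((q:ℝ))⁻¹ ≤ 1/2 := by
    rw [inv_le_comm₀ h0 (by norm_num)]; linarith
  calc ((q:ℝ))⁻¹ ^ i ≤ ((q:ℝ))⁻¹ ^ 1 :=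
        pow_le_pow_of_le_one (by positivity) (by linarith) hi
    _ ≤ 1/2 := by rw [pow_one]; exact h1

lemma g_pos (q : ℕ) (hc : 2 ≤ (q:ℝ)) {i : ℕ} (hi : 1 ≤ i) : 0 < 1 - ((q:ℝ))⁻¹ ^ i := by
  have := qinv_le q hc hi; linarith

lemma summable_log_g (q : ℕ) (hc : 2 ≤ (q:ℝ)) :
    Summable (fun j : ℕ => Real.log (1 - ((q:ℝ))⁻¹ ^ (j + 1))) := by
  have h0 : (0:ℝ) < q := by linarith
  rw [← summable_neg_iff]
  apply Summable.of_nonneg_of_le (f := fun j : ℕ => (2 * ((q:ℝ))⁻¹) * ((q:ℝ))⁻¹ ^ j)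
  · intro j
    have h1 : 1 - ((q:ℝ))⁻¹ ^ (j+1) ≤ 1 := by
      have : (0:ℝ) ≤ ((q:ℝ))⁻¹ ^ (j+1) := by positivity
      linarith
    have := Real.log_nonpos (le_of_lt (g_pos q hc (by omega))) h1
    linarith
  · intro j
    set a := ((q:ℝ))⁻¹ ^ (j+1) with ha
    have hle : a ≤ 1/2 := qinv_le q hc (by omega)
    have hann : 0 ≤ a := by positivity
    have hpos : 0 < 1 - a := by linarith
    have hlog := Real.one_sub_inv_le_log_of_pos hpos
    have hinv : (1 - a)⁻¹ ≤ 1 + 2 * a := by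
      rw [inv_le_iff_one_le_mul₀ hpos]
      nlinarith
    have : (2 * ((q:ℝ))⁻¹) * ((q:ℝ))⁻¹ ^ j = 2 * a := by
      rw [ha, pow_succ]; ring
    rw [this]
    linarith
  · apply Summable.mul_left
    apply summable_geometric_of_lt_one (by positivity)
    have := qinv_le q hc (le_refl 1)
    rw [pow_one] at this; linarith

lemma hasProd_g (q : ℕ) (hc : 2 ≤ (q:ℝ)) :
    HasProd (fun j : ℕ => 1 - ((q:ℝ))⁻¹ ^ (j + 1)) (Kq q) :=
  (Real.hasProd_of_hasSum_log (f := fun j : ℕ => 1 - ((q:ℝ))⁻¹ ^ (j + 1))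
    (fun j => g_pos q hc (by omega))
    (summable_log_g q hc).hasSum).multipliable.hasProd

lemma Kq_pos (q : ℕ) (hc : 2 ≤ (q:ℝ)) : 0 < Kq q := by
  have := Real.rexp_tsum_eq_tprod (f := fun j : ℕ => 1 - ((q:ℝ))⁻¹ ^ (j + 1))
    (fun j => g_pos q hc (by omega)) (summable_log_g q hc)
  have hK : Kq q = Real.exp (∑' j : ℕ, Real.log (1 - ((q:ℝ))⁻¹ ^ (j + 1))) := by
    rw [Kq]; exact this.symm
  rw [hK]; exact Real.exp_pos _

lemma KqTrunc_pos (q : ℕ) (hc : 2 ≤ (q:ℝ)) (k : ℕ) : 0 < KqTrunc q k := by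
  apply Finset.prod_pos
  intro j _
  exact g_pos q hc (by omega)

lemma tendsto_KqTrunc (q : ℕ) (hc : 2 ≤ (q:ℝ)) :
    Tendsto (fun k => KqTrunc q k) atTop (𝓝 (Kq q)) :=
  (hasProd_g q hc).tendsto_prod_nat

lemma key' (q : ℕ) (hc : 2 ≤ (q:ℝ)) (m k : ℕ) :
    qBinom q (m + k) k = (q:ℝ) ^ (k * m) * KqTrunc q (m + k) / (KqTrunc q m * KqTrunc q k) := by
  have h0 : (0:ℝ) < q := by linarith
  set c : ℝ := (q:ℝ) with hcdef
  have hfac : ∀ j ∈ Finset.range k, (c ^ (m + k - j) - 1) / (c ^ (k - j) - 1)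
      = c ^ m * ((1 - c⁻¹ ^ (m + k - j)) / (1 - c⁻¹ ^ (k - j))) := by
    intro j hj
    rw [Finset.mem_range] at hj
    have e1 : c ^ (m + k - j) - 1 = c ^ (m + k - j) * (1 - c⁻¹ ^ (m + k - j)) := by
      rw [mul_sub, mul_one, ← mul_pow, mul_inv_cancel₀ h0.ne', one_pow]
    have e2 : c ^ (k - j) - 1 = c ^ (k - j) * (1 - c⁻¹ ^ (k - j)) := by
      rw [mul_sub, mul_one, ← mul_pow, mul_inv_cancel₀ h0.ne', one_pow]
    have e3 : c ^ (m + k - j) = c ^ m * c ^ (k - j) := by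
      rw [← pow_add]; congr 1; omega
    have hne1 : c ^ (k - j) ≠ 0 := by positivity
    have hne2 : (1 - c⁻¹ ^ (k - j)) ≠ 0 := (g_pos q hc (by omega)).ne'
    rw [e1, e2, e3]
    field_simp
  have step1 : qBinom q (m + k) k
      = (c ^ m) ^ k * ((∏ j ∈ Finset.range k, (1 - c⁻¹ ^ (m + k - j)))
        / (∏ j ∈ Finset.range k, (1 - c⁻¹ ^ (k - j)))) := by
    rw [qBinom, Finset.prod_congr rfl hfac, Finset.prod_mul_distrib, Finset.prod_const, Finset.card_range,
      Finset.prod_div_distrib]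
  have hA : (∏ j ∈ Finset.range k, (1 - c⁻¹ ^ (k - j))) = KqTrunc q k := by
    rw [KqTrunc, ← Finset.prod_range_reflect (fun j => 1 - c⁻¹ ^ (j + 1)) k]
    apply Finset.prod_congr rfl
    intro j hj
    rw [Finset.mem_range] at hj
    have : k - 1 - j + 1 = k - j := by omega
    rw [this]
  have hB : (∏ j ∈ Finset.range k, (1 - c⁻¹ ^ (m + k - j)))
      = ∏ j ∈ Finset.range k, (1 - c⁻¹ ^ (m + j + 1)) := by
    rw [← Finset.prod_range_reflect (fun j => 1 - c⁻¹ ^ (m + j + 1)) k]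
    apply Finset.prod_congr rfl
    intro j hj
    rw [Finset.mem_range] at hj
    have : m + (k - 1 - j) + 1 = m + k - j := by omega
    rw [this]
  have hC : KqTrunc q (m + k) = KqTrunc q m * ∏ j ∈ Finset.range k, (1 - c⁻¹ ^ (m + j + 1)) := by
    rw [KqTrunc, KqTrunc, Finset.prod_range_add]
  have hpk : 0 < KqTrunc q k := KqTrunc_pos q hc k
  have hpm : 0 < KqTrunc q m := KqTrunc_pos q hc m
  rw [step1, hA, hB, hC, ← pow_mul, mul_comm m k]
  field_simp

lemma key (q : ℕ) (hc : 2 ≤ (q:ℝ)) {n k : ℕ} (hk : k ≤ n) :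
    qBinom q n k = (q:ℝ) ^ (k * (n - k)) * KqTrunc q n / (KqTrunc q (n - k) * KqTrunc q k) := by
  have := key' q hc (n - k) k
  rwa [Nat.sub_add_cancel hk] at this


end StmtSeven

theorem stmt7 (q : ℕ) (hq : IsPrimePow q) :
    Tendsto (fun n : ℕ => qBinom q n (n / 2) / (q : ℝ) ^ ((n / 2) * ((n + 1) / 2)))
      atTop (𝓝 (1 / Kq q)) := by
  have hq2 : 2 ≤ q := hq.two_le
  have hc : 2 ≤ (q:ℝ) := by exact_mod_cast hq2
  have hKpos := Kq_pos q hc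
  have heq : ∀ n : ℕ, qBinom q n (n / 2) / (q : ℝ) ^ ((n / 2) * ((n + 1) / 2))
      = KqTrunc q n / (KqTrunc q ((n + 1) / 2) * KqTrunc q (n / 2)) := by
    intro n
    rw [key q hc (show n / 2 ≤ n by omega), show n - n / 2 = (n + 1) / 2 from by omega]
    have h1 := KqTrunc_pos q hc ((n + 1) / 2)
    have h2 := KqTrunc_pos q hc (n / 2)
    have hp : (0:ℝ) < (q:ℝ) ^ ((n / 2) * ((n + 1) / 2)) := by positivity
    field_simp
  have h1 : Tendsto (fun n : ℕ => (n + 1) / 2) atTop atTop :=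
    tendsto_atTop_atTop.mpr (fun b => ⟨2 * b, fun a ha => by omega⟩)
  have h2 : Tendsto (fun n : ℕ => n / 2) atTop atTop :=
    tendsto_atTop_atTop.mpr (fun b => ⟨2 * b, fun a ha => by omega⟩)
  have hK := tendsto_KqTrunc q hc
  have hmain : Tendsto (fun n : ℕ => KqTrunc q n / (KqTrunc q ((n + 1) / 2) * KqTrunc q (n / 2)))
      atTop (𝓝 (Kq q / (Kq q * Kq q))) :=
    hK.div ((hK.comp h1).mul (hK.comp h2)) (by positivity)
  have hval : Kq q / (Kq q * Kq q) = 1 / Kq q := by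
    field_simp
  rw [hval] at hmain
  exact hmain.congr (fun n => (heq n).symm)
end

section
/- Let q ≥ 2 be a prime power. Then lim_{m→∞} binom(2m, m)_q / S(2m) = 1 / θ₃(q^{−1}). -/
open Filter Matrix
open scoped Topology

namespace Stmt12Aux

open Filter Finset

/-- `P q k = ∏_{i=1}^k (q^i - 1)`. -/
noncomputable def P (q k : ℕ) : ℝ := ∏ i ∈ Finset.range k, ((q : ℝ) ^ (i + 1) - 1)

variable {q : ℕ}

lemma two_le_q (hq : 2 ≤ q) : (2 : ℝ) ≤ (q : ℝ) := by exact_mod_cast hq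

lemma q_pos (hq : 2 ≤ q) : (0 : ℝ) < (q : ℝ) := by
  have := two_le_q hq; linarith

lemma r_nonneg (hq : 2 ≤ q) : (0 : ℝ) ≤ ((q : ℝ))⁻¹ := by positivity

lemma r_le_half (hq : 2 ≤ q) : ((q : ℝ))⁻¹ ≤ 1 / 2 := by
  rw [inv_le_comm₀ (q_pos hq) (by norm_num)]
  simpa using two_le_q hq

lemma r_lt_one (hq : 2 ≤ q) : ((q : ℝ))⁻¹ < 1 := by
  have := r_le_half hq; linarith

lemma one_le_P (hq : 2 ≤ q) (k : ℕ) : 1 ≤ P q k := by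
  unfold P
  induction k with
  | zero => simp
  | succ k ih =>
    rw [Finset.prod_range_succ]
    have h1 : (2 : ℝ) ≤ (q : ℝ) ^ (k + 1) := by
      calc (2 : ℝ) ≤ (q : ℝ) := two_le_q hq
        _ = (q : ℝ) ^ 1 := (pow_one _).symm
        _ ≤ (q : ℝ) ^ (k + 1) := by
          apply pow_le_pow_right₀ (by linarith [two_le_q hq]) (by omega)
    nlinarith

lemma P_pos (hq : 2 ≤ q) (k : ℕ) : 0 < P q k := lt_of_lt_of_le one_pos (one_le_P hq k)

lemma P_ne (hq : 2 ≤ q) (k : ℕ) : P q k ≠ 0 := (P_pos hq k).ne'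

lemma qBinom_eq_P (hq : 2 ≤ q) {n k : ℕ} (hkn : k ≤ n) :
    qBinom q n k = P q n / (P q k * P q (n - k)) := by
  have hden : ∏ j ∈ Finset.range k, ((q : ℝ) ^ (k - j) - 1) = P q k := by
    rw [P, ← Finset.prod_range_reflect]
    refine Finset.prod_congr rfl fun j hj => ?_
    rw [Finset.mem_range] at hj
    congr 2
    omega
  have hnum : ∏ j ∈ Finset.range k, ((q : ℝ) ^ (n - j) - 1)
      = ∏ i ∈ Finset.range k, ((q : ℝ) ^ (n - k + i + 1) - 1) := by
    rw [← Finset.prod_range_reflect]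
    refine Finset.prod_congr rfl fun j hj => ?_
    rw [Finset.mem_range] at hj
    congr 2
    omega
  have hsplit : P q n = P q (n - k) * ∏ i ∈ Finset.range k, ((q : ℝ) ^ (n - k + i + 1) - 1) := by
    have h : P q (n - k + k) = P q (n - k) * ∏ i ∈ Finset.range k, ((q : ℝ) ^ (n - k + i + 1) - 1) := by
      rw [P, P, Finset.prod_range_add]
    rwa [Nat.sub_add_cancel hkn] at h
  have hnk0 := P_ne hq (n - k)
  rw [qBinom, Finset.prod_div_distrib, hden, hnum]
  rw [hsplit, mul_comm (P q k) (P q (n - k)), mul_div_mul_left _ _ hnk0]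

lemma P_eq_K (hq : 2 ≤ q) (k : ℕ) :
    P q k = (q : ℝ) ^ (∑ i ∈ Finset.range k, (i + 1)) * KqTrunc q k := by
  rw [P, KqTrunc, ← Finset.prod_pow_eq_pow_sum, ← Finset.prod_mul_distrib]
  refine Finset.prod_congr rfl fun i _ => ?_
  have hq0 : (q : ℝ) ≠ 0 := (q_pos hq).ne'
  rw [inv_pow, mul_sub, mul_one, mul_inv_cancel₀ (pow_ne_zero _ hq0)]

lemma sum_exp (n : ℕ) : 2 * (∑ i ∈ Finset.range n, (i + 1)) = n * (n + 1) := by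
  induction n with
  | zero => simp
  | succ n ih =>
    rw [Finset.sum_range_succ, Nat.mul_add, ih]
    ring

lemma sum_exp_id {m j : ℕ} (hj : j ≤ m) :
    (∑ i ∈ Finset.range (m + j), (i + 1)) + (∑ i ∈ Finset.range (m - j), (i + 1))
      = 2 * (∑ i ∈ Finset.range m, (i + 1)) + j ^ 2 := by
  obtain ⟨d, rfl⟩ : ∃ d, m = d + j := ⟨m - j, by omega⟩
  have h1 := sum_exp (d + j + j)
  have h2 := sum_exp d
  have h3 := sum_exp (d + j)
  have h4 : d + j - j = d := by omega
  rw [h4]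
  nlinarith [h1, h2, h3]

-- bounds on KqTrunc
lemma one_sub_sum_le_prod (x : ℕ → ℝ) (h0 : ∀ i, 0 ≤ x i) (h1 : ∀ i, x i ≤ 1) (n : ℕ) :
    1 - ∑ i ∈ Finset.range n, x i ≤ ∏ i ∈ Finset.range n, (1 - x i) := by
  induction n with
  | zero => simp
  | succ n ih =>
    rw [Finset.sum_range_succ, Finset.prod_range_succ]
    have hp1 : ∏ i ∈ Finset.range n, (1 - x i) ≤ 1 :=
      Finset.prod_le_one (fun i _ => by linarith [h1 i]) (fun i _ => by linarith [h0 i])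
    nlinarith [h0 n, h1 n]

lemma KqTrunc_le_one (hq : 2 ≤ q) (k : ℕ) : KqTrunc q k ≤ 1 := by
  rw [KqTrunc]
  apply Finset.prod_le_one
  · intro i _
    have : ((q : ℝ))⁻¹ ^ (i + 1) ≤ 1 :=
      pow_le_one₀ (r_nonneg hq) (le_of_lt (r_lt_one hq))
    linarith
  · intro i _
    have : (0 : ℝ) ≤ ((q : ℝ))⁻¹ ^ (i + 1) := by positivity
    linarith

lemma KqTrunc_nonneg (hq : 2 ≤ q) (k : ℕ) : 0 ≤ KqTrunc q k := by
  rw [KqTrunc]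
  apply Finset.prod_nonneg
  intro i _
  have : ((q : ℝ))⁻¹ ^ (i + 1) ≤ 1 :=
    pow_le_one₀ (r_nonneg hq) (le_of_lt (r_lt_one hq))
  linarith

lemma quarter_le_KqTrunc (hq : 2 ≤ q) (k : ℕ) : 1 / 4 ≤ KqTrunc q k := by
  set r : ℝ := ((q : ℝ))⁻¹ with hrdef
  have hr0 : 0 ≤ r := r_nonneg hq
  have hrh : r ≤ 1 / 2 := r_le_half hq
  cases k with
  | zero => norm_num [KqTrunc]
  | succ k =>
    rw [KqTrunc, Finset.prod_range_succ']
    have hsum : ∑ i ∈ Finset.range k, r ^ (i + 1 + 1) ≤ 1 / 2 := by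
      have hgeom : ∑ i ∈ Finset.range k, r ^ i ≤ 2 := by
        calc ∑ i ∈ Finset.range k, r ^ i
            ≤ ∑ i ∈ Finset.range k, (1 / 2 : ℝ) ^ i :=
              Finset.sum_le_sum fun i _ => pow_le_pow_left₀ hr0 hrh i
          _ ≤ 2 := by
              have := sum_geometric_two_le k
              linarith
      have : ∑ i ∈ Finset.range k, r ^ (i + 1 + 1) = r ^ 2 * ∑ i ∈ Finset.range k, r ^ i := by
        rw [Finset.mul_sum]
        refine Finset.sum_congr rfl fun i _ => ?_
        ring
      rw [this]
      nlinarith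
    have hprod : (1 : ℝ) - ∑ i ∈ Finset.range k, r ^ (i + 1 + 1)
        ≤ ∏ i ∈ Finset.range k, (1 - r ^ (i + 1 + 1)) := by
      apply one_sub_sum_le_prod
      · intro i; positivity
      · intro i
        exact pow_le_one₀ hr0 (le_of_lt (r_lt_one hq))
    have h2 : (1 / 2 : ℝ) ≤ ∏ i ∈ Finset.range k, (1 - r ^ (i + 1 + 1)) := by linarith
    have h3 : (1 / 2 : ℝ) ≤ 1 - r ^ (0 + 1) := by
      simp only [pow_one, zero_add]
      linarith
    nlinarith

lemma KqTrunc_anti (hq : 2 ≤ q) : Antitone (KqTrunc q) := by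
  apply antitone_nat_of_succ_le
  intro n
  rw [KqTrunc, Finset.prod_range_succ, ← KqTrunc]
  have h1 : ((q : ℝ))⁻¹ ^ (n + 1) ≤ 1 := pow_le_one₀ (r_nonneg hq) (le_of_lt (r_lt_one hq))
  have h2 : (0:ℝ) ≤ ((q : ℝ))⁻¹ ^ (n + 1) := by positivity
  nlinarith [KqTrunc_nonneg hq n]

lemma KqTrunc_tendsto (hq : 2 ≤ q) :
    ∃ L : ℝ, 1 / 4 ≤ L ∧ Tendsto (KqTrunc q) atTop (𝓝 L) := by
  refine ⟨⨅ k, KqTrunc q k, ?_, ?_⟩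
  · exact le_ciInf fun k => quarter_le_KqTrunc hq k
  · exact tendsto_atTop_ciInf (KqTrunc_anti hq)
      ⟨1 / 4, fun x ⟨k, hk⟩ => hk ▸ quarter_le_KqTrunc hq k⟩

/-- The ratio function. -/
noncomputable def Fm (q m : ℕ) (j : ℤ) : ℝ :=
  if j.natAbs ≤ m then
    ((q : ℝ))⁻¹ ^ (j.natAbs ^ 2) * KqTrunc q m ^ 2
      / (KqTrunc q (m + j.natAbs) * KqTrunc q (m - j.natAbs))
  else 0

lemma P_ratio (hq : 2 ≤ q) {m d : ℕ} (hd : d ≤ m) :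
    P q m ^ 2 / (P q (m + d) * P q (m - d)) =
      ((q : ℝ))⁻¹ ^ (d ^ 2) * KqTrunc q m ^ 2 / (KqTrunc q (m + d) * KqTrunc q (m - d)) := by
  have hq0 : (q : ℝ) ≠ 0 := (q_pos hq).ne'
  have hK1 : KqTrunc q (m + d) ≠ 0 := by linarith [quarter_le_KqTrunc hq (m + d)]
  have hK2 : KqTrunc q (m - d) ≠ 0 := by linarith [quarter_le_KqTrunc hq (m - d)]
  have hexp : (q : ℝ) ^ (∑ i ∈ Finset.range (m + d), (i + 1)) *
      (q : ℝ) ^ (∑ i ∈ Finset.range (m - d), (i + 1)) =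
      ((q : ℝ) ^ (∑ i ∈ Finset.range m, (i + 1))) ^ 2 * (q : ℝ) ^ (d ^ 2) := by
    rw [← pow_add, ← pow_mul', ← pow_add, sum_exp_id hd]
  have hden : ((q : ℝ) ^ (∑ i ∈ Finset.range (m + d), (i + 1)) * KqTrunc q (m + d)) *
      ((q : ℝ) ^ (∑ i ∈ Finset.range (m - d), (i + 1)) * KqTrunc q (m - d)) =
      (((q : ℝ) ^ (∑ i ∈ Finset.range m, (i + 1))) ^ 2 * (q : ℝ) ^ (d ^ 2)) *
        (KqTrunc q (m + d) * KqTrunc q (m - d)) := by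
    rw [mul_mul_mul_comm, hexp]
  rw [P_eq_K hq, P_eq_K hq, P_eq_K hq, hden, mul_pow, inv_pow]
  have hQ : ((q : ℝ) ^ (∑ i ∈ Finset.range m, (i + 1))) ^ 2 ≠ 0 := by positivity
  have hq2 : ((q : ℝ) ^ (d ^ 2)) ≠ 0 := by positivity
  field_simp

lemma qBinom_ratio (hq : 2 ≤ q) {m k : ℕ} (hk : k ≤ 2 * m) :
    qBinom q (2 * m) k / qBinom q (2 * m) m = Fm q m ((k : ℤ) - (m : ℤ)) := by
  obtain ⟨d, hdm, hkd, hdval⟩ : ∃ d : ℕ, d ≤ m ∧ (k = m + d ∨ k = m - d) ∧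
      ((k : ℤ) - (m : ℤ)).natAbs = d := ⟨((k : ℤ) - (m : ℤ)).natAbs, by omega, by omega, rfl⟩
  have hFm : Fm q m ((k : ℤ) - (m : ℤ)) =
      ((q : ℝ))⁻¹ ^ (d ^ 2) * KqTrunc q m ^ 2
        / (KqTrunc q (m + d) * KqTrunc q (m - d)) := by
    rw [Fm, hdval, if_pos hdm]
  rw [hFm, ← P_ratio hq hdm]
  have h2m : m ≤ 2 * m := by omega
  have hmm : 2 * m - m = m := by omega
  clear hdval
  have e1 := P_ne hq (2 * m)
  have e2 := P_ne hq (m + d)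
  have e3 := P_ne hq (m - d)
  have e4 := P_ne hq m
  rcases hkd with rfl | rfl
  · have h2mk : 2 * m - (m + d) = m - d := by omega
    rw [qBinom_eq_P hq hk, qBinom_eq_P hq h2m, hmm, h2mk]
    field_simp
  · have h2mk : 2 * m - (m - d) = m + d := by omega
    rw [qBinom_eq_P hq hk, qBinom_eq_P hq h2m, hmm, h2mk]
    field_simp

lemma sum_eq_tsum (hq : 2 ≤ q) (m : ℕ) :
    Sq q (2 * m) / qBinom q (2 * m) m = ∑' j : ℤ, Fm q m j := by
  have hsupp : ∀ j : ℤ, j ∉ Finset.Icc (-(m : ℤ)) (m : ℤ) → Fm q m j = 0 := by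
    intro j hj
    rw [Finset.mem_Icc] at hj
    rw [Fm, if_neg]
    omega
  rw [tsum_eq_sum hsupp, Sq, Finset.sum_div]
  refine Finset.sum_nbij' (fun k => (k : ℤ) - (m : ℤ)) (fun z => (z + (m : ℤ)).toNat)
    ?_ ?_ ?_ ?_ ?_
  · intro a ha
    rw [Finset.mem_range] at ha
    rw [Finset.mem_Icc]
    omega
  · intro b hb
    rw [Finset.mem_Icc] at hb
    rw [Finset.mem_range]
    omega
  · intro a ha
    rw [Finset.mem_range] at ha
    omega
  · intro b hb
    rw [Finset.mem_Icc] at hb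
    omega
  · intro a ha
    rw [Finset.mem_range] at ha
    exact qBinom_ratio hq (by omega)

noncomputable def Gs (q : ℕ) (j : ℤ) : ℝ := ((q : ℝ))⁻¹ ^ (j.natAbs ^ 2)

lemma Gs_summable_nat (hq : 2 ≤ q) : Summable (fun n : ℕ => ((q : ℝ))⁻¹ ^ (n ^ 2)) := by
  apply Summable.of_nonneg_of_le (fun n => by positivity)
    (fun n => ?_) (summable_geometric_of_lt_one (r_nonneg hq) (r_lt_one hq))
  exact pow_le_pow_of_le_one (r_nonneg hq) (le_of_lt (r_lt_one hq))
    (Nat.le_self_pow (by norm_num) n)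

lemma Gs_summable (hq : 2 ≤ q) : Summable (Gs q) := by
  apply Summable.of_nat_of_neg
  · simpa [Gs] using Gs_summable_nat hq
  · simpa [Gs] using Gs_summable_nat hq

lemma Fm_bound (hq : 2 ≤ q) (m : ℕ) (j : ℤ) : ‖Fm q m j‖ ≤ 16 * Gs q j := by
  have hG0 : 0 ≤ Gs q j := by rw [Gs]; positivity
  rw [Real.norm_eq_abs, Fm]
  split_ifs with h
  · have hK1 := quarter_le_KqTrunc hq (m + j.natAbs)
    have hK2 := quarter_le_KqTrunc hq (m - j.natAbs)
    have hKm1 := KqTrunc_le_one hq m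
    have hKm0 := KqTrunc_nonneg hq m
    have hr : (0:ℝ) ≤ ((q : ℝ))⁻¹ ^ (j.natAbs ^ 2) := by positivity
    have hden : (0:ℝ) < KqTrunc q (m + j.natAbs) * KqTrunc q (m - j.natAbs) := by nlinarith
    rw [abs_of_nonneg (by positivity)]
    rw [div_le_iff₀ hden, Gs]
    have e1 : (1 : ℝ) / 16 ≤ KqTrunc q (m + j.natAbs) * KqTrunc q (m - j.natAbs) := by
      nlinarith
    have e2 : KqTrunc q m ^ 2 ≤ 1 := by nlinarith
    have e3 : ((q : ℝ))⁻¹ ^ (j.natAbs ^ 2) * KqTrunc q m ^ 2 ≤ ((q : ℝ))⁻¹ ^ (j.natAbs ^ 2) := by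
      nlinarith
    have e4 : ((q : ℝ))⁻¹ ^ (j.natAbs ^ 2) * (1 / 16 : ℝ) ≤
        ((q : ℝ))⁻¹ ^ (j.natAbs ^ 2) * (KqTrunc q (m + j.natAbs) * KqTrunc q (m - j.natAbs)) :=
      mul_le_mul_of_nonneg_left e1 hr
    nlinarith
  · rw [abs_zero]
    linarith

lemma Fm_tendsto (hq : 2 ≤ q) (j : ℤ) :
    Tendsto (fun m => Fm q m j) atTop (𝓝 (Gs q j)) := by
  obtain ⟨L, hL, hKL⟩ := KqTrunc_tendsto hq
  set d : ℕ := j.natAbs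
  have h1 : Tendsto (fun m => KqTrunc q (m + d)) atTop (𝓝 L) :=
    hKL.comp (tendsto_add_atTop_nat d)
  have h2 : Tendsto (fun m => KqTrunc q (m - d)) atTop (𝓝 L) :=
    hKL.comp (tendsto_sub_atTop_nat d)
  have hL0 : L ≠ 0 := by linarith
  have h3 : Tendsto (fun m => ((q : ℝ))⁻¹ ^ (d ^ 2) * KqTrunc q m ^ 2
      / (KqTrunc q (m + d) * KqTrunc q (m - d))) atTop
      (𝓝 (((q : ℝ))⁻¹ ^ (d ^ 2) * L ^ 2 / (L * L))) := by
    exact Tendsto.div (Tendsto.mul tendsto_const_nhds (hKL.pow 2)) (h1.mul h2)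
      (by positivity)
  have heq : ((q : ℝ))⁻¹ ^ (d ^ 2) * L ^ 2 / (L * L) = Gs q j := by
    rw [Gs]
    field_simp
    ring
  rw [← heq]
  apply Tendsto.congr' _ h3
  filter_upwards [eventually_ge_atTop d] with m hm
  rw [Fm, if_pos hm]

lemma theta3_eq_tsum (hq : 2 ≤ q) : theta3 ((q : ℝ))⁻¹ = ∑' j : ℤ, Gs q j := by
  rw [theta3]
  refine tsum_congr fun k => ?_
  have h : ((k : ℝ) ^ 2) = ((k.natAbs ^ 2 : ℕ) : ℝ) := by
    push_cast [Nat.cast_natAbs]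
    rw [sq_abs]
  rw [h, Real.rpow_natCast, Gs]

lemma theta3_pos (hq : 2 ≤ q) : 0 < theta3 ((q : ℝ))⁻¹ := by
  rw [theta3_eq_tsum hq]
  have h0 : Gs q 0 = 1 := by simp [Gs]
  have := Summable.le_tsum (Gs_summable hq) 0 (fun j _ => by rw [Gs]; positivity)
  rw [h0] at this
  linarith

end Stmt12Aux

theorem stmt12 (q : ℕ) (hq : IsPrimePow q) :
    Tendsto (fun m : ℕ => qBinom q (2 * m) m / Sq q (2 * m))
      atTop (𝓝 (1 / theta3 ((q : ℝ))⁻¹)) := by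
  have hq2 : 2 ≤ q := hq.two_le
  have hT : Tendsto (fun m : ℕ => Sq q (2 * m) / qBinom q (2 * m) m) atTop
      (𝓝 (theta3 ((q : ℝ))⁻¹)) := by
    rw [Stmt12Aux.theta3_eq_tsum hq2]
    have hdom := tendsto_tsum_of_dominated_convergence
      (f := fun (m : ℕ) (j : ℤ) => Stmt12Aux.Fm q m j) (g := Stmt12Aux.Gs q)
      (bound := fun j => 16 * Stmt12Aux.Gs q j)
      ((Stmt12Aux.Gs_summable hq2).mul_left 16)
      (Stmt12Aux.Fm_tendsto hq2)
      (Filter.Eventually.of_forall fun m j => Stmt12Aux.Fm_bound hq2 m j)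
    exact hdom.congr fun m => (Stmt12Aux.sum_eq_tsum hq2 m).symm
  have hθ : theta3 ((q : ℝ))⁻¹ ≠ 0 := (Stmt12Aux.theta3_pos hq2).ne'
  have h := hT.inv₀ hθ
  rw [one_div]
  exact h.congr fun m => inv_div _ _
end

section
/- Let q ≥ 2 be a prime power. For every fixed integer r we have lim_{m→∞} binom(2m, m−r)_q / S(2m) = q^{−r²} / θ₃(q^{−1}) and lim_{m→∞} binom(2m+1, m−r)_q / S(2m+1) = q^{−(r+1/2)²} / θ₂(q^{−1}); that is, the shifted distributions P^e_m(r) = p(m−r, 2m) and P^o_m(r+1/2) = p(m−r, 2m+1) converge pointwise to the discrete Gaussian θ₃ and θ₂ distributions with nome 1/q, respectively. -/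
open Filter Matrix
open scoped Topology

/-- `binom(n,k)_q` extended to integer `k`, equal to `0` for `k ∉ [0,n]`. -/
noncomputable def qBinomZ (q n : ℕ) (k : ℤ) : ℝ :=
  if 0 ≤ k ∧ k ≤ (n : ℤ) then qBinom q n k.toNat else 0

namespace S18

open Finset

variable {q : ℕ}

lemma two_le_Q (hq : 2 ≤ q) : (2:ℝ) ≤ (q:ℝ) := by exact_mod_cast hq

lemma w_pos (hq : 2 ≤ q) : 0 < ((q:ℝ))⁻¹ := by
  have := two_le_Q hq; exact inv_pos.2 (by linarith)

lemma w_le_half (hq : 2 ≤ q) : ((q:ℝ))⁻¹ ≤ 1/2 := by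
  have h := two_le_Q hq
  rw [show (1:ℝ)/2 = 2⁻¹ by norm_num]
  exact inv_anti₀ (by norm_num) h

lemma w_lt_one (hq : 2 ≤ q) : ((q:ℝ))⁻¹ < 1 :=
  lt_of_le_of_lt (w_le_half hq) (by norm_num)

lemma one_sub_sum_le_prod (f : ℕ → ℝ) (h0 : ∀ i, 0 ≤ f i) (h1 : ∀ i, f i ≤ 1) (n : ℕ) :
    1 - ∑ i ∈ range n, f i ≤ ∏ i ∈ range n, (1 - f i) := by
  induction n with
  | zero => simp
  | succ n ih =>
    rw [Finset.prod_range_succ, Finset.sum_range_succ]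
    have hp : 0 ≤ ∏ i ∈ range n, (1 - f i) :=
      Finset.prod_nonneg fun i _ => by linarith [h1 i]
    have hs0 : 0 ≤ ∑ i ∈ range n, f i := Finset.sum_nonneg fun i _ => h0 i
    nlinarith [h0 n, h1 n, mul_le_mul_of_nonneg_right ih (by linarith [h1 n] : (0:ℝ) ≤ 1 - f n)]

lemma quarter_le_KqTrunc (hq : 2 ≤ q) (n : ℕ) : 1/4 ≤ KqTrunc q n := by
  have hw0 := w_pos hq
  have hwh := w_le_half hq
  cases n with
  | zero => norm_num [KqTrunc]
  | succ m =>
    rw [KqTrunc, Finset.prod_range_succ']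
    have hP : 1 - ∑ i ∈ range m, ((q:ℝ))⁻¹ ^ (i + 1 + 1) ≤
        ∏ i ∈ range m, (1 - ((q:ℝ))⁻¹ ^ (i + 1 + 1)) :=
      one_sub_sum_le_prod _ (fun i => by positivity)
        (fun i => pow_le_one₀ hw0.le (by linarith)) m
    have hsum : ∑ i ∈ range m, ((q:ℝ))⁻¹ ^ (i + 1 + 1) ≤ 1/2 := by
      have he : ∑ i ∈ range m, ((q:ℝ))⁻¹ ^ (i + 1 + 1)
          = ((q:ℝ))⁻¹ ^ 2 * ∑ i ∈ range m, ((q:ℝ))⁻¹ ^ i := by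
        rw [Finset.mul_sum]; exact Finset.sum_congr rfl fun i _ => by ring
      have hgeo : ∑ i ∈ range m, ((q:ℝ))⁻¹ ^ i ≤ 2 := by
        rw [geom_sum_eq (by linarith [w_lt_one hq] : ((q:ℝ))⁻¹ ≠ 1),
          div_le_iff_of_neg (by linarith [w_lt_one hq] : ((q:ℝ))⁻¹ - 1 < 0)]
        have h1 : (0:ℝ) ≤ ((q:ℝ))⁻¹ ^ m := by positivity
        nlinarith
      have hge0 : (0:ℝ) ≤ ∑ i ∈ range m, ((q:ℝ))⁻¹ ^ i :=
        Finset.sum_nonneg fun i _ => by positivity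
      rw [he]; nlinarith
    have hfac : 1/2 ≤ 1 - ((q:ℝ))⁻¹ ^ (0 + 1) := by
      rw [pow_one]; linarith
    nlinarith [hP, hsum, hfac]

lemma KqTrunc_pos (hq : 2 ≤ q) (n : ℕ) : 0 < KqTrunc q n :=
  lt_of_lt_of_le (by norm_num) (quarter_le_KqTrunc hq n)

lemma KqTrunc_le_one (hq : 2 ≤ q) (n : ℕ) : KqTrunc q n ≤ 1 := by
  have hw0 := w_pos hq
  have hw1 := w_lt_one hq
  refine Finset.prod_le_one (fun i _ => ?_) (fun i _ => ?_)
  · have : ((q:ℝ))⁻¹ ^ (i+1) ≤ 1 := pow_le_one₀ hw0.le hw1.le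
    linarith
  · have : (0:ℝ) ≤ ((q:ℝ))⁻¹ ^ (i+1) := by positivity
    linarith


lemma multipliable_K (hq : 2 ≤ q) :
    Multipliable (fun j : ℕ => 1 - ((q:ℝ))⁻¹ ^ (j + 1)) := by
  have hw0 := w_pos hq
  have hw1 := w_lt_one hq
  have hterm : ∀ j : ℕ, 0 ≤ 1 - ((q:ℝ))⁻¹ ^ (j + 1) := fun j => by
    have : ((q:ℝ))⁻¹ ^ (j+1) ≤ 1 := pow_le_one₀ hw0.le hw1.le
    linarith
  have hterm1 : ∀ j : ℕ, 1 - ((q:ℝ))⁻¹ ^ (j + 1) ≤ 1 := fun j => by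
    have : (0:ℝ) ≤ ((q:ℝ))⁻¹ ^ (j+1) := by positivity
    linarith
  refine ⟨_, tendsto_atTop_ciInf ?_ ?_⟩
  · intro s t hst
    have h := Finset.prod_sdiff hst (f := fun j => 1 - ((q:ℝ))⁻¹ ^ (j + 1))
    dsimp only at h ⊢
    rw [← h]
    have h1 : ∏ j ∈ t \ s, (1 - ((q:ℝ))⁻¹ ^ (j + 1)) ≤ 1 :=
      Finset.prod_le_one (fun j _ => hterm j) (fun j _ => hterm1 j)
    have h2 : 0 ≤ ∏ j ∈ s, (1 - ((q:ℝ))⁻¹ ^ (j + 1)) :=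
      Finset.prod_nonneg fun j _ => hterm j
    exact mul_le_of_le_one_left h2 h1
  · refine ⟨0, ?_⟩
    rintro x ⟨s, rfl⟩
    exact Finset.prod_nonneg fun j _ => hterm j

lemma tendsto_KqTrunc (hq : 2 ≤ q) :
    Tendsto (fun n => KqTrunc q n) atTop (𝓝 (Kq q)) := by
  have := (multipliable_K hq).hasProd.tendsto_prod_nat
  simpa [KqTrunc, Kq] using this

lemma quarter_le_Kq (hq : 2 ≤ q) : 1/4 ≤ Kq q :=
  ge_of_tendsto (tendsto_KqTrunc hq)
    (Filter.Eventually.of_forall (quarter_le_KqTrunc hq))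

lemma Kq_pos (hq : 2 ≤ q) : 0 < Kq q :=
  lt_of_lt_of_le (by norm_num) (quarter_le_Kq hq)

lemma denom_pos (hq : 2 ≤ q) (k : ℕ) :
    0 < ∏ j ∈ range k, ((q:ℝ) ^ (j + 1) - 1) := by
  refine Finset.prod_pos fun j _ => ?_
  have h := two_le_Q hq
  have : (1:ℝ) < (q:ℝ) ^ (j + 1) := one_lt_pow₀ (by linarith) (by omega)
  linarith

lemma qBinom_eq_div (n k : ℕ) :
    qBinom q n k = (∏ j ∈ range k, ((q:ℝ) ^ (n - j) - 1)) /
      (∏ j ∈ range k, ((q:ℝ) ^ (j + 1) - 1)) := by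
  rw [qBinom, Finset.prod_div_distrib]
  congr 1
  rw [← Finset.prod_range_reflect (fun j => ((q:ℝ) ^ (j + 1) - 1)) k]
  refine Finset.prod_congr rfl fun j hj => ?_
  rw [Finset.mem_range] at hj
  congr 2
  omega

lemma qBinom_succ_mul (hq : 2 ≤ q) {n k : ℕ} (h : k < n) :
    qBinom q n (k + 1) * ((q:ℝ) ^ (k + 1) - 1) = qBinom q n k * ((q:ℝ) ^ (n - k) - 1) := by
  rw [qBinom_eq_div, qBinom_eq_div, Finset.prod_range_succ, Finset.prod_range_succ]
  have hD := (denom_pos hq k).ne'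
  have h2 := two_le_Q hq
  have hD1 : ((q:ℝ) ^ (k + 1) - 1) ≠ 0 := by
    have : (1:ℝ) < (q:ℝ) ^ (k + 1) := one_lt_pow₀ (by linarith) (by omega)
    linarith
  field_simp

lemma qBinom_K (hq : 2 ≤ q) {n k : ℕ} (h : k ≤ n) :
    qBinom q n k * (KqTrunc q k * KqTrunc q (n - k)) = (q:ℝ) ^ (k * (n - k)) * KqTrunc q n := by
  induction k with
  | zero => simp [qBinom, KqTrunc]
  | succ k ih =>
    have hk : k ≤ n := by omega
    have hIH := ih hk
    have hQ0 : (q:ℝ) ≠ 0 := by have := two_le_Q hq; linarith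
    have hrec := qBinom_succ_mul hq (show k < n by omega)
    have hwq : ∀ i : ℕ, (q:ℝ) ^ i * ((q:ℝ))⁻¹ ^ i = 1 := fun i => by
      rw [← mul_pow, mul_inv_cancel₀ hQ0, one_pow]
    have hK1 : (q:ℝ) ^ (k + 1) * KqTrunc q (k + 1) = KqTrunc q k * ((q:ℝ) ^ (k + 1) - 1) := by
      simp only [KqTrunc, Finset.prod_range_succ]
      linear_combination (-(∏ j ∈ range k, (1 - ((q:ℝ))⁻¹ ^ (j + 1)))) * hwq (k + 1)
    have hK2 : (q:ℝ) ^ (n - k) * KqTrunc q (n - k)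
        = KqTrunc q (n - (k + 1)) * ((q:ℝ) ^ (n - k) - 1) := by
      have e : n - k = (n - (k + 1)) + 1 := by omega
      rw [e]
      simp only [KqTrunc, Finset.prod_range_succ]
      linear_combination (-(∏ j ∈ range (n - (k+1)), (1 - ((q:ℝ))⁻¹ ^ (j + 1)))) * hwq (n - (k+1) + 1)
    have hpow : (q:ℝ) ^ ((k + 1) * (n - (k + 1))) * (q:ℝ) ^ (k + 1)
        = (q:ℝ) ^ (k * (n - k)) * (q:ℝ) ^ (n - k) := by
      rw [← pow_add, ← pow_add]
      congr 1
      have e : n - k = (n - (k + 1)) + 1 := by omega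
      rw [e]
      ring
    refine mul_left_cancel₀ (pow_ne_zero (k + 1) hQ0) ?_
    linear_combination (qBinom q n (k + 1) * KqTrunc q (n - (k + 1))) * hK1
      + (KqTrunc q k * KqTrunc q (n - (k + 1))) * hrec
      + (-(qBinom q n k * KqTrunc q k)) * hK2
      + ((q:ℝ) ^ (n - k)) * hIH
      + (-(KqTrunc q n)) * hpow

lemma qBinom_formula (hq : 2 ≤ q) {n k : ℕ} (h : k ≤ n) :
    qBinom q n k = (q:ℝ) ^ (k * (n - k)) * KqTrunc q n /
      (KqTrunc q k * KqTrunc q (n - k)) := by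
  rw [eq_div_iff (mul_pos (KqTrunc_pos hq k) (KqTrunc_pos hq (n - k))).ne']
  exact qBinom_K hq h


noncomputable def gfun (q c m : ℕ) (s : ℤ) : ℝ :=
  if -(m:ℤ) - c ≤ s ∧ s ≤ (m:ℤ) then
    ((q:ℝ))⁻¹ ^ (s ^ 2 + c * s).toNat /
      (KqTrunc q ((m:ℤ) - s).toNat * KqTrunc q ((m:ℤ) + c + s).toNat)
  else 0

variable {c m : ℕ}

lemma gfun_nonneg (hq : 2 ≤ q) (c m : ℕ) (s : ℤ) : 0 ≤ gfun q c m s := by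
  unfold gfun
  split
  · have hw0 := w_pos hq
    have h1 := KqTrunc_pos hq ((m:ℤ) - s).toNat
    have h2 := KqTrunc_pos hq ((m:ℤ) + c + s).toNat
    positivity
  · exact le_refl 0

lemma sE_nonneg (hc : c ≤ 1) (s : ℤ) : 0 ≤ s ^ 2 + (c:ℤ) * s := by
  rcases le_or_gt 0 s with h | h
  · have h1 : (0:ℤ) ≤ (c:ℤ) := by positivity
    nlinarith
  · have h1 : (c:ℤ) ≤ 1 := by exact_mod_cast hc
    nlinarith [mul_nonneg (by omega : (0:ℤ) ≤ -s) (by omega : (0:ℤ) ≤ -(s + c))]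

lemma term_eq (hq : 2 ≤ q) (hc : c ≤ 1) (m : ℕ) (s : ℤ)
    (hs1 : -(m:ℤ) - c ≤ s) (hs2 : s ≤ (m:ℤ)) :
    qBinom q (2 * m + c) ((m:ℤ) - s).toNat
      = (KqTrunc q (2 * m + c) * (q:ℝ) ^ (m ^ 2 + c * m)) * gfun q c m s := by
  have hQ0 : (q:ℝ) ≠ 0 := by have := two_le_Q hq; linarith
  have hsE := sE_nonneg hc s
  set k := ((m:ℤ) - s).toNat with hkdef
  have hk' : ((k:ℕ):ℤ) = (m:ℤ) - s := Int.toNat_of_nonneg (by omega)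
  have hkn : k ≤ 2 * m + c := by omega
  have hnk : 2 * m + c - k = ((m:ℤ) + c + s).toNat := by omega
  have hE : (((s ^ 2 + (c:ℤ) * s).toNat : ℕ) : ℤ) = s ^ 2 + c * s := Int.toNat_of_nonneg hsE
  have hexp : k * (2 * m + c - k) + (s ^ 2 + (c:ℤ) * s).toNat = m ^ 2 + c * m := by
    have h2 : ((2 * m + c - k : ℕ) : ℤ) = (m:ℤ) + c + s := by omega
    have h3 : ((k * (2 * m + c - k) + (s ^ 2 + (c:ℤ) * s).toNat : ℕ) : ℤ)
        = ((m ^ 2 + c * m : ℕ) : ℤ) := by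
      push_cast [h2, hk', hE]
      ring
    exact_mod_cast h3
  have hpow : (q:ℝ) ^ (k * (2 * m + c - k))
      = (q:ℝ) ^ (m ^ 2 + c * m) * ((q:ℝ))⁻¹ ^ ((s ^ 2 + (c:ℤ) * s).toNat) := by
    have h1 : (q:ℝ) ^ ((s ^ 2 + (c:ℤ) * s).toNat) * ((q:ℝ))⁻¹ ^ ((s ^ 2 + (c:ℤ) * s).toNat) = 1 := by
      rw [← mul_pow, mul_inv_cancel₀ hQ0, one_pow]
    rw [← hexp, pow_add, mul_assoc, h1, mul_one]
  rw [qBinom_formula hq hkn, hpow, hnk, gfun, if_pos ⟨hs1, hs2⟩]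
  ring

lemma gfun_support (hq : 2 ≤ q) (c m : ℕ) :
    ∀ s ∉ Finset.Icc (-(m:ℤ) - c) (m:ℤ), gfun q c m s = 0 := by
  intro s hs
  rw [Finset.mem_Icc] at hs
  exact if_neg hs

lemma summable_gfun (hq : 2 ≤ q) (c m : ℕ) : Summable (gfun q c m) :=
  summable_of_ne_finset_zero (gfun_support hq c m)

lemma Sq_eq (hq : 2 ≤ q) (hc : c ≤ 1) (m : ℕ) :
    Sq q (2 * m + c) = (KqTrunc q (2 * m + c) * (q:ℝ) ^ (m ^ 2 + c * m)) *
      ∑' s : ℤ, gfun q c m s := by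
  rw [tsum_eq_sum (gfun_support hq c m), Finset.mul_sum, Sq]
  refine Finset.sum_nbij' (i := fun k : ℕ => (m:ℤ) - k) (j := fun s : ℤ => ((m:ℤ) - s).toNat)
    ?_ ?_ ?_ ?_ ?_
  · intro k hk
    simp only [Finset.mem_range] at hk
    simp only [Finset.mem_Icc]
    omega
  · intro s hs
    simp only [Finset.mem_Icc] at hs
    simp only [Finset.mem_range]
    omega
  · intro k hk
    simp only [Finset.mem_range] at hk
    omega
  · intro s hs
    simp only [Finset.mem_Icc] at hs
    omega
  · intro k hk
    simp only [Finset.mem_range] at hk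
    have h := term_eq hq hc m ((m:ℤ) - k) (by omega) (by omega)
    rw [show (((m:ℤ) - ((m:ℤ) - k)).toNat) = k from by omega] at h
    exact h

lemma num_eq (hq : 2 ≤ q) (hc : c ≤ 1) (m : ℕ) (r : ℤ) (hm : r.natAbs ≤ m) :
    qBinomZ q (2 * m + c) ((m:ℤ) - r)
      = (KqTrunc q (2 * m + c) * (q:ℝ) ^ (m ^ 2 + c * m)) * gfun q c m r := by
  rw [qBinomZ, if_pos (by constructor <;> omega)]
  exact term_eq hq hc m r (by omega) (by omega)


lemma tendsto_K_of (hq : 2 ≤ q) {f : ℕ → ℕ} (hf : Tendsto f atTop atTop) :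
    Tendsto (fun m => KqTrunc q (f m)) atTop (𝓝 (Kq q)) :=
  (tendsto_KqTrunc hq).comp hf

lemma tendsto_gfun (hq : 2 ≤ q) (hc : c ≤ 1) (s : ℤ) :
    Tendsto (fun m => gfun q c m s) atTop
      (𝓝 (((q:ℝ))⁻¹ ^ ((s ^ 2 + (c:ℤ) * s).toNat) / (Kq q * Kq q))) := by
  have h1 : Tendsto (fun m : ℕ => KqTrunc q ((m:ℤ) - s).toNat) atTop (𝓝 (Kq q)) :=
    tendsto_K_of hq (Filter.tendsto_atTop_atTop.2
      fun b => ⟨b + s.natAbs, fun n hn => by omega⟩)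
  have h2 : Tendsto (fun m : ℕ => KqTrunc q ((m:ℤ) + c + s).toNat) atTop (𝓝 (Kq q)) :=
    tendsto_K_of hq (Filter.tendsto_atTop_atTop.2
      fun b => ⟨b + s.natAbs, fun n hn => by omega⟩)
  have h3 := Filter.Tendsto.div
    (tendsto_const_nhds (x := ((q:ℝ))⁻¹ ^ ((s ^ 2 + (c:ℤ) * s).toNat)))
    (h1.mul h2) (mul_pos (Kq_pos hq) (Kq_pos hq)).ne'
  refine Filter.Tendsto.congr' ?_ h3
  filter_upwards [Filter.eventually_ge_atTop s.natAbs] with m hm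
  exact (if_pos ⟨by omega, by omega⟩).symm

lemma natAbs_le_E (hc : c ≤ 1) (s : ℤ) :
    s.natAbs ≤ (s ^ 2 + (c:ℤ) * s).toNat + 1 := by
  rcases le_or_gt 0 s with h | h
  · have h1 : s ≤ s ^ 2 + (c:ℤ) * s := by nlinarith [sq_nonneg s, (by positivity : (0:ℤ) ≤ (c:ℤ))]
    generalize hEE : s ^ 2 + (c:ℤ) * s = E at h1 ⊢
    omega
  · have hc1 : (c:ℤ) ≤ 1 := by exact_mod_cast hc
    have h1 : -s - 1 ≤ s ^ 2 + (c:ℤ) * s := by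
      nlinarith [mul_nonneg (by omega : (0:ℤ) ≤ -(s + 1)) (by omega : (0:ℤ) ≤ -(s + c))]
    generalize hEE : s ^ 2 + (c:ℤ) * s = E at h1 ⊢
    omega

lemma summable_wE (hq : 2 ≤ q) (hc : c ≤ 1) :
    Summable (fun s : ℤ => ((q:ℝ))⁻¹ ^ ((s ^ 2 + (c:ℤ) * s).toNat)) := by
  have hw0 := w_pos hq
  have hw1 := w_lt_one hq
  have hb : Summable (fun s : ℤ => ((q:ℝ))⁻¹⁻¹ * ((q:ℝ))⁻¹ ^ s.natAbs) := by
    have hn : Summable (fun n : ℕ => ((q:ℝ))⁻¹⁻¹ * ((q:ℝ))⁻¹ ^ n) :=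
      (summable_geometric_of_lt_one hw0.le hw1).mul_left _
    refine Summable.of_nat_of_neg (by simpa using hn) (by simpa using hn)
  refine Summable.of_nonneg_of_le (fun s => by positivity) (fun s => ?_) hb
  have key := natAbs_le_E hc s
  have h2 : ((q:ℝ))⁻¹ ^ ((s ^ 2 + (c:ℤ) * s).toNat + 1) ≤ ((q:ℝ))⁻¹ ^ s.natAbs :=
    pow_le_pow_of_le_one hw0.le hw1.le key
  have h3 : ((q:ℝ))⁻¹ ^ ((s ^ 2 + (c:ℤ) * s).toNat)
      = ((q:ℝ))⁻¹⁻¹ * ((q:ℝ))⁻¹ ^ ((s ^ 2 + (c:ℤ) * s).toNat + 1) := by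
    rw [pow_succ]
    field_simp
    ring_nf
    rw [mul_inv_cancel₀ (ne_of_gt (by have := two_le_Q hq; linarith)), one_mul]
  rw [h3]
  exact mul_le_mul_of_nonneg_left h2 (by positivity)

lemma tendsto_tsum_gfun (hq : 2 ≤ q) (hc : c ≤ 1) :
    Tendsto (fun m => ∑' s : ℤ, gfun q c m s) atTop
      (𝓝 ((∑' s : ℤ, ((q:ℝ))⁻¹ ^ ((s ^ 2 + (c:ℤ) * s).toNat)) / (Kq q * Kq q))) := by
  have hb := (summable_wE hq hc).mul_left 16
  have hdom := tendsto_tsum_of_dominated_convergence (𝓕 := atTop)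
    (f := fun (m : ℕ) (s : ℤ) => gfun q c m s)
    (g := fun s : ℤ => ((q:ℝ))⁻¹ ^ ((s ^ 2 + (c:ℤ) * s).toNat) / (Kq q * Kq q))
    (bound := fun s : ℤ => 16 * ((q:ℝ))⁻¹ ^ ((s ^ 2 + (c:ℤ) * s).toNat))
    hb (tendsto_gfun hq hc) ?_
  · rw [← tsum_div_const]
    exact hdom
  · refine Filter.Eventually.of_forall fun m => fun s => ?_
    rw [Real.norm_eq_abs, abs_of_nonneg (gfun_nonneg hq c m s)]
    unfold gfun
    split
    · set K1 := KqTrunc q ((m:ℤ) - s).toNat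
      set K2 := KqTrunc q ((m:ℤ) + c + s).toNat
      have hK1 := quarter_le_KqTrunc hq ((m:ℤ) - s).toNat
      have hK2 := quarter_le_KqTrunc hq ((m:ℤ) + c + s).toNat
      have hwE : (0:ℝ) ≤ ((q:ℝ))⁻¹ ^ ((s ^ 2 + (c:ℤ) * s).toNat) := by
        have := w_pos hq; positivity
      rw [div_le_iff₀ (by nlinarith : (0:ℝ) < K1 * K2)]
      nlinarith [mul_le_mul_of_nonneg_left (by nlinarith : (1:ℝ) ≤ 16 * (K1 * K2)) hwE]
    · positivity

lemma main_limit (hq : 2 ≤ q) (hc : c ≤ 1) (r : ℤ) :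
    Tendsto (fun m : ℕ => qBinomZ q (2 * m + c) ((m:ℤ) - r) / Sq q (2 * m + c)) atTop
      (𝓝 (((q:ℝ))⁻¹ ^ ((r ^ 2 + (c:ℤ) * r).toNat) /
        ∑' s : ℤ, ((q:ℝ))⁻¹ ^ ((s ^ 2 + (c:ℤ) * s).toNat))) := by
  have hK := Kq_pos hq
  have hT1 : (1:ℝ) ≤ ∑' s : ℤ, ((q:ℝ))⁻¹ ^ ((s ^ 2 + (c:ℤ) * s).toNat) := by
    have h := Summable.le_tsum (summable_wE hq hc) 0 (fun j _ => by have := w_pos hq; positivity)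
    simpa using h
  have hTpos : (0:ℝ) < ∑' s : ℤ, ((q:ℝ))⁻¹ ^ ((s ^ 2 + (c:ℤ) * s).toNat) := by linarith
  have h := Filter.Tendsto.div (tendsto_gfun hq hc r) (tendsto_tsum_gfun hq hc)
    (div_pos hTpos (mul_pos hK hK)).ne'
  have heq : ((q:ℝ))⁻¹ ^ ((r ^ 2 + (c:ℤ) * r).toNat) / (Kq q * Kq q) /
      ((∑' s : ℤ, ((q:ℝ))⁻¹ ^ ((s ^ 2 + (c:ℤ) * s).toNat)) / (Kq q * Kq q))
      = ((q:ℝ))⁻¹ ^ ((r ^ 2 + (c:ℤ) * r).toNat) /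
        ∑' s : ℤ, ((q:ℝ))⁻¹ ^ ((s ^ 2 + (c:ℤ) * s).toNat) := by
    rw [div_div_div_cancel_right₀]
    exact (mul_pos hK hK).ne'
  rw [heq] at h
  refine Filter.Tendsto.congr' ?_ h
  filter_upwards [Filter.eventually_ge_atTop r.natAbs] with m hm
  rw [num_eq hq hc m r hm, Sq_eq hq hc m]
  rw [mul_div_mul_left _ _
    (mul_pos (KqTrunc_pos hq (2 * m + c))
      (pow_pos (by have := two_le_Q hq; linarith : (0:ℝ) < (q:ℝ)) (m ^ 2 + c * m))).ne']
  rfl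

end S18

theorem stmt18 (q : ℕ) (hq : IsPrimePow q) (r : ℤ) :
    Tendsto (fun m : ℕ => qBinomZ q (2 * m) ((m : ℤ) - r) / Sq q (2 * m))
      atTop (𝓝 ((q : ℝ) ^ (-(r ^ 2)) / theta3 ((q : ℝ))⁻¹)) ∧
    Tendsto (fun m : ℕ => qBinomZ q (2 * m + 1) ((m : ℤ) - r) / Sq q (2 * m + 1))
      atTop (𝓝 ((q : ℝ) ^ (-(((r : ℝ) + 1 / 2) ^ 2)) / theta2 ((q : ℝ))⁻¹)) := by
  have hq2 : 2 ≤ q := hq.two_le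
  have hQ2 := S18.two_le_Q hq2
  have hw0 := S18.w_pos hq2
  have hQpos : (0:ℝ) < (q:ℝ) := by linarith
  constructor
  · have h := S18.main_limit hq2 (c := 0) (by norm_num) r
    simp only [Nat.cast_zero, zero_mul, add_zero, Nat.add_zero] at h
    have hnum : (q:ℝ) ^ (-(r ^ 2)) = ((q:ℝ))⁻¹ ^ ((r ^ 2).toNat) := by
      have h1 : (((r ^ 2).toNat : ℕ) : ℤ) = r ^ 2 := Int.toNat_of_nonneg (sq_nonneg r)
      have h2 : (q:ℝ) ^ (r ^ 2) = (q:ℝ) ^ (((r ^ 2).toNat : ℕ)) := by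
        rw [← zpow_natCast, h1]
      rw [_root_.zpow_neg, h2, inv_pow]
    have hden : theta3 ((q:ℝ))⁻¹ = ∑' s : ℤ, ((q:ℝ))⁻¹ ^ ((s ^ 2).toNat) := by
      unfold theta3
      refine tsum_congr fun k => ?_
      rw [← Real.rpow_natCast ((q:ℝ))⁻¹ ((k ^ 2).toNat)]
      congr 1
      have h1 : (((k ^ 2).toNat : ℕ) : ℤ) = k ^ 2 := Int.toNat_of_nonneg (sq_nonneg k)
      have h2 := congrArg (fun z : ℤ => (z : ℝ)) h1
      push_cast at h2
      linarith
    rw [hnum, hden]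
    exact h
  · have h := S18.main_limit hq2 (c := 1) le_rfl r
    simp only [Nat.cast_one, one_mul] at h
    have hrr : ∀ k : ℤ, 0 ≤ k ^ 2 + k := fun k => by
      rcases le_or_gt 0 k with h' | h'
      · nlinarith
      · nlinarith
    have hterm : ∀ k : ℤ, ((q:ℝ))⁻¹ ^ (((k:ℝ) + 1/2) ^ 2) =
        ((q:ℝ))⁻¹ ^ ((1:ℝ)/4) * ((q:ℝ))⁻¹ ^ ((k ^ 2 + k).toNat) := by
      intro k
      have h1 : (((k ^ 2 + k).toNat : ℕ) : ℤ) = k ^ 2 + k := Int.toNat_of_nonneg (hrr k)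
      have h2 := congrArg (fun z : ℤ => (z : ℝ)) h1
      push_cast at h2
      have hcast : ((k:ℝ) + 1/2) ^ 2 = (((k ^ 2 + k).toNat : ℕ) : ℝ) + 1/4 := by
        rw [h2]; ring
      rw [hcast, Real.rpow_add hw0, Real.rpow_natCast, mul_comm]
    have hden : theta2 ((q:ℝ))⁻¹
        = ((q:ℝ))⁻¹ ^ ((1:ℝ)/4) * ∑' s : ℤ, ((q:ℝ))⁻¹ ^ ((s ^ 2 + s).toNat) := by
      unfold theta2
      rw [← tsum_mul_left]
      exact tsum_congr hterm
    have hnum : (q:ℝ) ^ (-(((r:ℝ) + 1/2) ^ 2))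
        = ((q:ℝ))⁻¹ ^ ((1:ℝ)/4) * ((q:ℝ))⁻¹ ^ ((r ^ 2 + r).toNat) := by
      rw [Real.rpow_neg hQpos.le, ← Real.inv_rpow hQpos.le]
      exact hterm r
    rw [hnum, hden, mul_div_mul_left _ _ (ne_of_gt (Real.rpow_pos_of_pos hw0 _))]
    exact h
end

section
/- Let q ≥ 2 be a prime power. Then S(2m) ∼ ( θ₃(q^{−1}) / K_q ) · q^{m²} and S(2m+1) ∼ ( θ₂(q^{−1}) / K_q ) · q^{(m+1/2)²} as m → ∞; that is, lim_{m→∞} S(2m) · K_q / ( θ₃(q^{−1}) · q^{m²} ) = 1 and lim_{m→∞} S(2m+1) · K_q / ( θ₂(q^{−1}) · q^{(m+1/2)²} ) = 1. -/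
open Filter Matrix
open scoped Topology

namespace Stmt19Aux

open Filter Real

variable {q : ℕ}

lemma hQ2 (hq : 2 ≤ q) : (2:ℝ) ≤ (q:ℝ) := by exact_mod_cast hq
lemma hQ0 (hq : 2 ≤ q) : (0:ℝ) < (q:ℝ) := lt_of_lt_of_le two_pos (hQ2 hq)
lemma hx0 (hq : 2 ≤ q) : (0:ℝ) < ((q:ℝ))⁻¹ := inv_pos.mpr (hQ0 hq)
lemma hxhalf (hq : 2 ≤ q) : ((q:ℝ))⁻¹ ≤ 1/2 := by
  rw [inv_le_comm₀ (hQ0 hq) (by norm_num)]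
  simpa using hQ2 hq
lemma hx1 (hq : 2 ≤ q) : ((q:ℝ))⁻¹ < 1 := lt_of_le_of_lt (hxhalf hq) (by norm_num)

lemma pow_half (hq : 2 ≤ q) (j : ℕ) : ((q:ℝ))⁻¹ ^ (j+1) ≤ 1/2 :=
  le_trans (pow_le_of_le_one (hx0 hq).le (hx1 hq).le (Nat.succ_ne_zero j)) (hxhalf hq)

lemma factor_pos (hq : 2 ≤ q) (j : ℕ) : 0 < 1 - ((q:ℝ))⁻¹ ^ (j+1) := by
  have := pow_half hq j; linarith

lemma factor_le_one (hq : 2 ≤ q) (j : ℕ) : 1 - ((q:ℝ))⁻¹ ^ (j+1) ≤ 1 := by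
  have := pow_pos (hx0 hq) (j+1); linarith

lemma exp_neg_le {t : ℝ} (h0 : 0 ≤ t) (h1 : t ≤ 1/2) : Real.exp (-(2*t)) ≤ 1 - t := by
  have h2 : (2*t) + 1 ≤ Real.exp (2*t) := Real.add_one_le_exp _
  have hmul : Real.exp (-(2*t)) * Real.exp (2*t) = 1 := by
    rw [← Real.exp_add]; ring_nf; exact Real.exp_zero
  nlinarith [Real.exp_pos (-(2*t)), Real.exp_pos (2*t),
    mul_nonneg h0 (by linarith : (0:ℝ) ≤ 1 - 2*t)]

lemma log_bound {t : ℝ} (h0 : 0 ≤ t) (h1 : t ≤ 1/2) : |Real.log (1 - t)| ≤ 2*t := by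
  have hpos : (0:ℝ) < 1 - t := by linarith
  have hle : Real.log (1-t) ≤ 0 := Real.log_nonpos (by linarith) (by linarith)
  have hge : -(2*t) ≤ Real.log (1-t) := by
    rw [Real.le_log_iff_exp_le hpos]; exact exp_neg_le h0 h1
  rw [abs_le]; constructor <;> linarith

lemma summable_pow_succ (hq : 2 ≤ q) : Summable (fun j : ℕ => ((q:ℝ))⁻¹ ^ (j+1)) := by
  have := (summable_geometric_of_lt_one (hx0 hq).le (hx1 hq)).mul_right ((q:ℝ))⁻¹
  exact this.congr (fun j => by rw [pow_succ])

lemma summable_log (hq : 2 ≤ q) :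
    Summable (fun j : ℕ => Real.log (1 - ((q:ℝ))⁻¹ ^ (j+1))) := by
  apply Summable.of_norm_bounded (g := fun j => 2 * ((q:ℝ))⁻¹ ^ (j+1))
    ((summable_pow_succ hq).mul_left 2)
  intro j
  have := log_bound (t := ((q:ℝ))⁻¹ ^ (j+1)) (by positivity) (pow_half hq j)
  simpa [Real.norm_eq_abs, mul_comm] using this

lemma hasProd_Kq (hq : 2 ≤ q) : HasProd (fun j : ℕ => 1 - ((q:ℝ))⁻¹ ^ (j+1)) (Kq q) :=
  (Real.hasProd_of_hasSum_log (f := fun j : ℕ => 1 - ((q:ℝ))⁻¹ ^ (j+1))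
    (fun j => factor_pos hq j) (summable_log hq).hasSum).multipliable.hasProd

lemma tendsto_KqTrunc (hq : 2 ≤ q) : Tendsto (KqTrunc q) atTop (𝓝 (Kq q)) :=
  (hasProd_Kq hq).tendsto_prod_nat

lemma Kq_pos (hq : 2 ≤ q) : 0 < Kq q := by
  have h := Real.rexp_tsum_eq_tprod (f := fun j : ℕ => 1 - ((q:ℝ))⁻¹ ^ (j+1))
    (fun j => factor_pos hq j) (summable_log hq)
  rw [show Kq q = ∏' j : ℕ, (1 - ((q:ℝ))⁻¹ ^ (j+1)) from rfl, ← h]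
  exact Real.exp_pos _

lemma KqTrunc_pos (hq : 2 ≤ q) (k : ℕ) : 0 < KqTrunc q k :=
  Finset.prod_pos (fun j _ => factor_pos hq j)

lemma KqTrunc_le_one (hq : 2 ≤ q) (k : ℕ) : KqTrunc q k ≤ 1 :=
  Finset.prod_le_one (fun j _ => (factor_pos hq j).le) (fun j _ => factor_le_one hq j)

lemma KqTrunc_antitone (hq : 2 ≤ q) : Antitone (KqTrunc q) := by
  apply antitone_nat_of_succ_le
  intro n
  have h : KqTrunc q (n+1) = KqTrunc q n * (1 - ((q:ℝ))⁻¹ ^ (n+1)) := Finset.prod_range_succ _ n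
  rw [h]
  nlinarith [KqTrunc_pos hq n, factor_pos hq n, factor_le_one hq n]

lemma Kq_le_KqTrunc (hq : 2 ≤ q) (k : ℕ) : Kq q ≤ KqTrunc q k := by
  apply le_of_tendsto (tendsto_KqTrunc hq)
  filter_upwards [eventually_ge_atTop k] with n hn
  exact KqTrunc_antitone hq hn

lemma Kq_le_one (hq : 2 ≤ q) : Kq q ≤ 1 := (Kq_le_KqTrunc hq 0).trans (KqTrunc_le_one hq 0)

lemma prod_top (hq : 2 ≤ q) {k n : ℕ} (hkn : k ≤ n) :
    (∏ j ∈ Finset.range k, (1 - ((q:ℝ))⁻¹ ^ (n - j))) * KqTrunc q (n - k) = KqTrunc q n := by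
  induction k with
  | zero => simp [KqTrunc]
  | succ k ih =>
    have hk : k ≤ n := le_of_lt hkn
    rw [Finset.prod_range_succ]
    have h1 : KqTrunc q (n - k) = KqTrunc q (n - (k+1)) * (1 - ((q:ℝ))⁻¹ ^ (n - k)) := by
      have h2 : n - k = (n - (k+1)) + 1 := by omega
      rw [KqTrunc, h2, Finset.prod_range_succ, ← KqTrunc]
    calc (∏ j ∈ Finset.range k, (1 - ((q:ℝ))⁻¹ ^ (n - j))) * (1 - ((q:ℝ))⁻¹ ^ (n - k)) *
          KqTrunc q (n - (k+1))
        = (∏ j ∈ Finset.range k, (1 - ((q:ℝ))⁻¹ ^ (n - j))) * KqTrunc q (n - k) := by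
          rw [h1]; ring
      _ = KqTrunc q n := ih hk


end Stmt19Aux

namespace Stmt19Aux
open Filter Real
variable {q : ℕ}

lemma qBinom_eq' (hq : 2 ≤ q) {n k : ℕ} (hkn : k ≤ n) :
    qBinom q n k = (q:ℝ) ^ (k * (n - k)) * KqTrunc q n / (KqTrunc q k * KqTrunc q (n - k)) := by
  have hQne : (q:ℝ) ≠ 0 := ne_of_gt (hQ0 hq)
  have hfac : ∀ a : ℕ, (q:ℝ) ^ a - 1 = (q:ℝ) ^ a * (1 - ((q:ℝ))⁻¹ ^ a) := by
    intro a
    rw [mul_sub, mul_one, ← mul_pow, mul_inv_cancel₀ hQne, one_pow]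
  rw [qBinom, Finset.prod_div_distrib]
  have hrefl : ∏ j ∈ Finset.range k, ((q:ℝ)^(k-j) - 1)
      = ∏ j ∈ Finset.range k, ((q:ℝ)^(j+1) - 1) := by
    rw [← Finset.prod_range_reflect (fun j => ((q:ℝ)^(j+1) - 1)) k]
    exact Finset.prod_congr rfl (fun j hj => by
      rw [Finset.mem_range] at hj
      rw [show k-1-j+1 = k-j from by omega])
  have hden : (∏ j ∈ Finset.range k, ((q:ℝ) ^ (k - j) - 1)) =
      (∏ j ∈ Finset.range k, (q:ℝ) ^ (j+1)) * KqTrunc q k := by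
    rw [hrefl, Finset.prod_congr rfl (fun j _ => hfac (j+1)), Finset.prod_mul_distrib, KqTrunc]
  have hnum : (∏ j ∈ Finset.range k, ((q:ℝ) ^ (n - j) - 1)) =
      (∏ j ∈ Finset.range k, (q:ℝ) ^ (n-j)) *
        (∏ j ∈ Finset.range k, (1 - ((q:ℝ))⁻¹ ^ (n-j))) := by
    rw [Finset.prod_congr rfl (fun j _ => hfac (n-j)), Finset.prod_mul_distrib]
  have hswap : ∀ j ∈ Finset.range k, n - j = (n-k) + (k-j) := fun j hj => by
    rw [Finset.mem_range] at hj; omega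
  have hrefl2 : ∑ j ∈ Finset.range k, (k - j) = ∑ j ∈ Finset.range k, (j+1) := by
    rw [← Finset.sum_range_reflect (fun j => j+1) k]
    apply Finset.sum_congr rfl
    intro j hj
    rw [Finset.mem_range] at hj
    omega
  have hsum1 : ∑ j ∈ Finset.range k, (n-j) = k*(n-k) + ∑ j ∈ Finset.range k, (j+1) := by
    calc ∑ j ∈ Finset.range k, (n-j)
        = ∑ j ∈ Finset.range k, ((n-k)+(k-j)) := Finset.sum_congr rfl hswap
      _ = k*(n-k) + ∑ j ∈ Finset.range k, (k-j) := by
          rw [Finset.sum_add_distrib, Finset.sum_const, Finset.card_range, smul_eq_mul]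
      _ = k*(n-k) + ∑ j ∈ Finset.range k, (j+1) := by rw [hrefl2]
  have hpow : (∏ j ∈ Finset.range k, (q:ℝ) ^ (n-j)) =
      (q:ℝ)^(k*(n-k)) * ∏ j ∈ Finset.range k, (q:ℝ)^(j+1) := by
    rw [Finset.prod_pow_eq_pow_sum, Finset.prod_pow_eq_pow_sum, hsum1, pow_add]
  have hR : (∏ j ∈ Finset.range k, (1 - ((q:ℝ))⁻¹ ^ (n-j)))
      = KqTrunc q n / KqTrunc q (n-k) := by
    rw [eq_div_iff (ne_of_gt (KqTrunc_pos hq _))]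
    exact prod_top hq hkn
  have hPd : (0:ℝ) < ∏ j ∈ Finset.range k, (q:ℝ)^(j+1) :=
    Finset.prod_pos (fun j _ => pow_pos (hQ0 hq) _)
  rw [hnum, hpow, hden, hR]
  have h1 := KqTrunc_pos hq k
  have h2 := KqTrunc_pos hq (n-k)
  have h3 := KqTrunc_pos hq n
  field_simp

/-- The core dominated convergence lemma. -/
lemma core (hq : 2 ≤ q) (E : ℤ → ℕ)
    (hE : Summable fun j : ℤ => ((q:ℝ))⁻¹ ^ E j)
    (F : ℕ → ℤ → ℝ) (a b : ℕ → ℤ → ℕ) (N : ℕ → ℕ)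
    (ha : ∀ j, Tendsto (fun m => a m j) atTop atTop)
    (hb : ∀ j, Tendsto (fun m => b m j) atTop atTop)
    (hN : Tendsto N atTop atTop)
    (hFev : ∀ j, ∀ᶠ m in atTop, F m j =
      ((q:ℝ))⁻¹ ^ E j * (KqTrunc q (N m) * Kq q) / (KqTrunc q (a m j) * KqTrunc q (b m j)))
    (hFcases : ∀ m j, F m j = 0 ∨ F m j =
      ((q:ℝ))⁻¹ ^ E j * (KqTrunc q (N m) * Kq q) / (KqTrunc q (a m j) * KqTrunc q (b m j))) :
    Tendsto (fun m => ∑' j, F m j) atTop (𝓝 (∑' j : ℤ, ((q:ℝ))⁻¹ ^ E j)) := by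
  have hK := Kq_pos hq
  have hbound : ∀ m j, F m j =
      ((q:ℝ))⁻¹ ^ E j * (KqTrunc q (N m) * Kq q) / (KqTrunc q (a m j) * KqTrunc q (b m j)) →
      ‖F m j‖ ≤ ((q:ℝ))⁻¹ ^ E j / Kq q := by
    intro m j h
    have hxE : (0:ℝ) ≤ ((q:ℝ))⁻¹ ^ E j := by positivity
    have hKa := KqTrunc_pos hq (a m j)
    have hKb := KqTrunc_pos hq (b m j)
    have hKN1 := KqTrunc_le_one hq (N m)
    have hKN0 := KqTrunc_pos hq (N m)
    have h1 : ((q:ℝ))⁻¹ ^ E j * (KqTrunc q (N m) * Kq q) ≤ ((q:ℝ))⁻¹ ^ E j * (1 * Kq q) := by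
      gcongr
    have h2 : Kq q * Kq q ≤ KqTrunc q (a m j) * KqTrunc q (b m j) := by
      have := Kq_le_KqTrunc hq (a m j)
      have := Kq_le_KqTrunc hq (b m j)
      nlinarith
    rw [h, Real.norm_eq_abs, abs_of_nonneg (by positivity)]
    calc ((q:ℝ))⁻¹ ^ E j * (KqTrunc q (N m) * Kq q) / (KqTrunc q (a m j) * KqTrunc q (b m j))
        ≤ ((q:ℝ))⁻¹ ^ E j * (1 * Kq q) / (Kq q * Kq q) := by
          apply div_le_div₀ (by positivity) h1 (by positivity) h2
      _ = ((q:ℝ))⁻¹ ^ E j / Kq q := by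
          rw [one_mul]
          field_simp
  apply tendsto_tsum_of_dominated_convergence (bound := fun j => ((q:ℝ))⁻¹ ^ E j / Kq q)
  · exact hE.div_const _
  · intro j
    apply Tendsto.congr' ((hFev j).mono fun m hm => hm.symm)
    have hKa : Tendsto (fun m => KqTrunc q (a m j)) atTop (𝓝 (Kq q)) :=
      (tendsto_KqTrunc hq).comp (ha j)
    have hKb : Tendsto (fun m => KqTrunc q (b m j)) atTop (𝓝 (Kq q)) :=
      (tendsto_KqTrunc hq).comp (hb j)
    have hKN : Tendsto (fun m => KqTrunc q (N m)) atTop (𝓝 (Kq q)) :=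
      (tendsto_KqTrunc hq).comp hN
    have hmain : Tendsto (fun m =>
        ((q:ℝ))⁻¹ ^ E j * (KqTrunc q (N m) * Kq q) /
          (KqTrunc q (a m j) * KqTrunc q (b m j))) atTop
        (𝓝 (((q:ℝ))⁻¹ ^ E j * (Kq q * Kq q) / (Kq q * Kq q))) :=
      (tendsto_const_nhds.mul (hKN.mul tendsto_const_nhds)).div (hKa.mul hKb)
        (by positivity)
    have : ((q:ℝ))⁻¹ ^ E j * (Kq q * Kq q) / (Kq q * Kq q) = ((q:ℝ))⁻¹ ^ E j := by
      field_simp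
    rwa [this] at hmain
  · filter_upwards with m
    intro j
    rcases hFcases m j with h | h
    · rw [h]
      simp only [norm_zero]
      positivity
    · exact hbound m j h

lemma summable_int_pow (hq : 2 ≤ q) : Summable (fun j : ℤ => ((q:ℝ))⁻¹ ^ j.natAbs) := by
  apply Summable.of_nat_of_neg
  · simpa using summable_geometric_of_lt_one (hx0 hq).le (hx1 hq)
  · simpa using summable_geometric_of_lt_one (hx0 hq).le (hx1 hq)

lemma summable_even (hq : 2 ≤ q) : Summable (fun j : ℤ => ((q:ℝ))⁻¹ ^ (j.natAbs ^ 2)) := by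
  apply Summable.of_nonneg_of_le (fun j => by positivity) _ (summable_int_pow hq)
  intro j
  exact pow_le_pow_of_le_one (hx0 hq).le (hx1 hq).le (Nat.le_self_pow two_ne_zero _)

lemma consec_nonneg (z : ℤ) : 0 ≤ z * (z - 1) := by
  rcases le_or_gt 1 z with h | h
  · exact mul_nonneg (by linarith) (by linarith)
  · have h1 : z ≤ 0 := by omega
    nlinarith

lemma natAbs_le_consec (j : ℤ) : j.natAbs ≤ (j * (j - 1)).toNat + 1 := by
  have hz := consec_nonneg j
  have h : (j.natAbs : ℤ) ≤ j * (j - 1) + 1 := by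
    rcases Int.natAbs_eq j with h | h
    · nlinarith [sq_nonneg ((j.natAbs : ℤ) - 1)]
    · nlinarith [sq_nonneg (j.natAbs : ℤ)]
  omega

lemma summable_odd (hq : 2 ≤ q) :
    Summable (fun j : ℤ => ((q:ℝ))⁻¹ ^ (j * (j - 1)).toNat) := by
  apply Summable.of_nonneg_of_le (fun j => by positivity) _
    ((summable_int_pow hq).mul_left ((q:ℝ)))
  intro j
  have h1 : ((q:ℝ))⁻¹ ^ ((j * (j - 1)).toNat + 1) ≤ ((q:ℝ))⁻¹ ^ j.natAbs :=
    pow_le_pow_of_le_one (hx0 hq).le (hx1 hq).le (natAbs_le_consec j)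
  have hQne : (q:ℝ) ≠ 0 := ne_of_gt (hQ0 hq)
  calc ((q:ℝ))⁻¹ ^ (j * (j - 1)).toNat
      = (q:ℝ) * (((q:ℝ))⁻¹ ^ ((j * (j - 1)).toNat + 1)) := by
        rw [pow_succ]
        field_simp
    _ ≤ (q:ℝ) * ((q:ℝ))⁻¹ ^ j.natAbs := by
        apply mul_le_mul_of_nonneg_left h1 (hQ0 hq).le

lemma theta3_eq (hq : 2 ≤ q) :
    theta3 ((q:ℝ))⁻¹ = ∑' j : ℤ, ((q:ℝ))⁻¹ ^ (j.natAbs ^ 2) := by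
  apply tsum_congr
  intro j
  have h : ((j.natAbs ^ 2 : ℕ) : ℝ) = ((j:ℝ))^2 := by
    push_cast [Nat.cast_natAbs]
    exact sq_abs _
  rw [← h, Real.rpow_natCast]

lemma theta3_pos (hq : 2 ≤ q) : (1:ℝ) ≤ theta3 ((q:ℝ))⁻¹ := by
  rw [theta3_eq hq]
  have h := Summable.le_tsum (summable_even hq) 0 (fun j _ => by positivity)
  simpa using h

lemma theta2_eq (hq : 2 ≤ q) :
    theta2 ((q:ℝ))⁻¹ =
      (∑' j : ℤ, ((q:ℝ))⁻¹ ^ (j * (j - 1)).toNat) * ((q:ℝ))⁻¹ ^ ((1:ℝ)/4) := by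
  rw [theta2, ← (Equiv.subRight (1:ℤ)).tsum_eq, ← tsum_mul_right]
  apply tsum_congr
  intro j
  have hz := consec_nonneg j
  have h : (((j - 1 : ℤ):ℝ) + 1/2)^2 = (((j * (j-1)).toNat : ℕ) : ℝ) + 1/4 := by
    have h2 : (((j * (j-1)).toNat : ℕ) : ℝ) = ((j:ℝ) * ((j:ℝ) - 1)) := by
      rw [show (((j * (j-1)).toNat : ℕ) : ℝ) = (((j * (j-1)).toNat : ℤ) : ℝ) by push_cast; ring,
        Int.toNat_of_nonneg hz]
      push_cast
      ring
    rw [h2]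
    push_cast
    ring
  simp only [Equiv.subRight_apply]
  rw [h, Real.rpow_add (hx0 hq), Real.rpow_natCast]

lemma theta2_pos (hq : 2 ≤ q) : (0:ℝ) < theta2 ((q:ℝ))⁻¹ := by
  rw [theta2_eq hq]
  apply mul_pos _ (Real.rpow_pos_of_pos (hx0 hq) _)
  have h := Summable.le_tsum (summable_odd hq) 0 (fun j _ => by positivity)
  calc (0:ℝ) < 1 := one_pos
    _ ≤ _ := by simpa using h

end Stmt19Aux

namespace Stmt19Aux
open Filter Real
variable {q : ℕ}

noncomputable def Fe (q m : ℕ) (j : ℤ) : ℝ :=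
  if j.natAbs ≤ m then
    ((q:ℝ))⁻¹ ^ (j.natAbs^2) * (KqTrunc q (2*m) * Kq q) /
      (KqTrunc q ((m:ℤ)+j).toNat * KqTrunc q ((m:ℤ)-j).toNat)
  else 0

noncomputable def Fo (q m : ℕ) (j : ℤ) : ℝ :=
  if -(m:ℤ) ≤ j ∧ j ≤ (m:ℤ)+1 then
    ((q:ℝ))⁻¹ ^ ((j*(j-1)).toNat) * (KqTrunc q (2*m+1) * Kq q) /
      (KqTrunc q ((m:ℤ)+j).toNat * KqTrunc q ((m:ℤ)+1-j).toNat)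
  else 0

lemma even_term (hq : 2 ≤ q) {m k : ℕ} (hk : k ≤ 2*m) :
    Fe q m ((k:ℤ)-m) = qBinom q (2*m) k * Kq q / (q:ℝ)^(m^2) := by
  have hcond : ((k:ℤ)-m).natAbs ≤ m := by omega
  rw [Fe, if_pos hcond,
    show ((m:ℤ)+((k:ℤ)-m)).toNat = k from by omega,
    show ((m:ℤ)-((k:ℤ)-m)).toNat = 2*m-k from by omega,
    qBinom_eq' hq hk]
  have he : ((k:ℤ)-m).natAbs^2 + k*(2*m-k) = m^2 := by
    zify [hk]
    rw [sq_abs]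
    ring
  have hsplit : (q:ℝ)^(m^2) = (q:ℝ)^(((k:ℤ)-m).natAbs^2) * (q:ℝ)^(k*(2*m-k)) := by
    rw [← pow_add, he]
  rw [hsplit, inv_pow]
  have h1 := KqTrunc_pos hq k
  have h2 := KqTrunc_pos hq (2*m-k)
  have h3 := KqTrunc_pos hq (2*m)
  have hQ := hQ0 hq
  have hp1 : (0:ℝ) < (q:ℝ)^(((k:ℤ)-m).natAbs^2) := by positivity
  have hp2 : (0:ℝ) < (q:ℝ)^(k*(2*m-k)) := by positivity
  field_simp

lemma odd_term (hq : 2 ≤ q) {m k : ℕ} (hk : k ≤ 2*m+1) :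
    Fo q m ((k:ℤ)-m) / (q:ℝ) ^ ((1:ℝ)/4)
      = qBinom q (2*m+1) k * Kq q / (q:ℝ) ^ (((m:ℝ)+1/2)^2) := by
  have hcond : -(m:ℤ) ≤ (k:ℤ)-m ∧ (k:ℤ)-m ≤ (m:ℤ)+1 := by omega
  rw [Fo, if_pos hcond,
    show ((m:ℤ)+((k:ℤ)-m)).toNat = k from by omega,
    show ((m:ℤ)+1-((k:ℤ)-m)).toNat = 2*m+1-k from by omega,
    qBinom_eq' hq hk]
  have hz := consec_nonneg ((k:ℤ)-m)
  have he : (((k:ℤ)-m)*(((k:ℤ)-m)-1)).toNat + k*(2*m+1-k) = m^2+m := by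
    zify [hk]
    rw [Int.toNat_of_nonneg hz]
    ring
  have hrpow : (q:ℝ) ^ (((m:ℝ)+1/2)^2) = (q:ℝ)^(m^2+m) * (q:ℝ) ^ ((1:ℝ)/4) := by
    rw [show ((m:ℝ)+1/2)^2 = ((m^2+m : ℕ):ℝ) + 1/4 from by push_cast; ring,
      Real.rpow_add (hQ0 hq), Real.rpow_natCast]
  have hsplit : (q:ℝ)^(m^2+m)
      = (q:ℝ)^((((k:ℤ)-m)*(((k:ℤ)-m)-1)).toNat) * (q:ℝ)^(k*(2*m+1-k)) := by
    rw [← pow_add, he]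
  rw [hrpow, hsplit, inv_pow]
  have h1 := KqTrunc_pos hq k
  have h2 := KqTrunc_pos hq (2*m+1-k)
  have h3 := KqTrunc_pos hq (2*m+1)
  have hQ := hQ0 hq
  have hp1 : (0:ℝ) < (q:ℝ)^((((k:ℤ)-m)*(((k:ℤ)-m)-1)).toNat) := by positivity
  have hp2 : (0:ℝ) < (q:ℝ)^(k*(2*m+1-k)) := by positivity
  have hp3 : (0:ℝ) < (q:ℝ) ^ ((1:ℝ)/4) := Real.rpow_pos_of_pos hQ _
  field_simp

lemma even_sum (hq : 2 ≤ q) (m : ℕ) :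
    Sq q (2*m) * Kq q / (q:ℝ)^(m^2) = ∑' j : ℤ, Fe q m j := by
  have hmap : ∑' j : ℤ, Fe q m j
      = ∑ k ∈ Finset.range (2*m+1), Fe q m ((k:ℤ)-m) := by
    rw [tsum_eq_sum (s := (Finset.range (2*m+1)).map
      ⟨fun k : ℕ => (k:ℤ)-(m:ℤ), fun a b h => by simpa using h⟩)]
    · rw [Finset.sum_map]
      rfl
    · intro j hj
      rw [Fe, if_neg]
      intro hcon
      apply hj
      simp only [Finset.mem_map, Finset.mem_range, Function.Embedding.coeFn_mk]
      exact ⟨(j + m).toNat, by omega, by show ((j + m).toNat : ℤ) - m = j; omega⟩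
  rw [hmap, Sq, Finset.sum_mul, Finset.sum_div]
  exact Finset.sum_congr rfl (fun k hk => by
    rw [Finset.mem_range] at hk
    exact (even_term hq (by omega)).symm)

lemma odd_sum (hq : 2 ≤ q) (m : ℕ) :
    Sq q (2*m+1) * Kq q / (q:ℝ) ^ (((m:ℝ)+1/2)^2)
      = (∑' j : ℤ, Fo q m j) / (q:ℝ) ^ ((1:ℝ)/4) := by
  have hmap : ∑' j : ℤ, Fo q m j
      = ∑ k ∈ Finset.range (2*m+1+1), Fo q m ((k:ℤ)-m) := by
    rw [tsum_eq_sum (s := (Finset.range (2*m+1+1)).map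
      ⟨fun k : ℕ => (k:ℤ)-(m:ℤ), fun a b h => by simpa using h⟩)]
    · rw [Finset.sum_map]
      rfl
    · intro j hj
      rw [Fo, if_neg]
      intro hcon
      apply hj
      simp only [Finset.mem_map, Finset.mem_range, Function.Embedding.coeFn_mk]
      exact ⟨(j + m).toNat, by omega, by show ((j + m).toNat : ℤ) - m = j; omega⟩
  rw [hmap, Finset.sum_div, Sq, Finset.sum_mul, Finset.sum_div]
  exact Finset.sum_congr rfl (fun k hk => by
    rw [Finset.mem_range] at hk
    exact (odd_term hq (by omega)).symm)

lemma even_core (hq : 2 ≤ q) :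
    Tendsto (fun m => ∑' j : ℤ, Fe q m j) atTop (𝓝 (theta3 ((q:ℝ))⁻¹)) := by
  rw [theta3_eq hq]
  apply core hq (fun j => j.natAbs^2) (summable_even hq) (Fe q)
    (fun m j => ((m:ℤ)+j).toNat) (fun m j => ((m:ℤ)-j).toNat) (fun m => 2*m)
  · intro j
    exact tendsto_atTop_atTop.mpr (fun c => ⟨c + j.natAbs, fun m hm => by omega⟩)
  · intro j
    exact tendsto_atTop_atTop.mpr (fun c => ⟨c + j.natAbs, fun m hm => by omega⟩)
  · exact tendsto_atTop_atTop.mpr (fun c => ⟨c, fun m hm => by omega⟩)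
  · intro j
    filter_upwards [eventually_ge_atTop j.natAbs] with m hm
    rw [Fe, if_pos hm]
  · intro m j
    rw [Fe]
    split
    · right; rfl
    · left; rfl

lemma odd_core (hq : 2 ≤ q) :
    Tendsto (fun m => ∑' j : ℤ, Fo q m j) atTop
      (𝓝 (∑' j : ℤ, ((q:ℝ))⁻¹ ^ (j*(j-1)).toNat)) := by
  apply core hq (fun j => (j*(j-1)).toNat) (summable_odd hq) (Fo q)
    (fun m j => ((m:ℤ)+j).toNat) (fun m j => ((m:ℤ)+1-j).toNat) (fun m => 2*m+1)
  · intro j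
    exact tendsto_atTop_atTop.mpr (fun c => ⟨c + j.natAbs, fun m hm => by omega⟩)
  · intro j
    exact tendsto_atTop_atTop.mpr (fun c => ⟨c + j.natAbs, fun m hm => by omega⟩)
  · exact tendsto_atTop_atTop.mpr (fun c => ⟨c, fun m hm => by omega⟩)
  · intro j
    filter_upwards [eventually_ge_atTop j.natAbs] with m hm
    rw [Fo, if_pos (by omega)]
  · intro m j
    rw [Fo]
    split
    · right; rfl
    · left; rfl

end Stmt19Aux

theorem stmt19 (q : ℕ) (hq : IsPrimePow q) :
    Tendsto (fun m : ℕ => Sq q (2 * m) * Kq q / (theta3 ((q : ℝ))⁻¹ * (q : ℝ) ^ (m ^ 2)))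
      atTop (𝓝 1) ∧
    Tendsto (fun m : ℕ =>
        Sq q (2 * m + 1) * Kq q / (theta2 ((q : ℝ))⁻¹ * (q : ℝ) ^ (((m : ℝ) + 1 / 2) ^ 2)))
      atTop (𝓝 1) := by
  have hq2 : 2 ≤ q := hq.two_le
  open Stmt19Aux in
  constructor
  · have hθ : (0:ℝ) < theta3 ((q:ℝ))⁻¹ := lt_of_lt_of_le one_pos (Stmt19Aux.theta3_pos hq2)
    have h := (Stmt19Aux.even_core (q := q) hq2).div_const (theta3 ((q:ℝ))⁻¹)
    rw [div_self (ne_of_gt hθ)] at h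
    apply h.congr
    intro m
    rw [← Stmt19Aux.even_sum hq2 m, mul_comm (theta3 ((q:ℝ))⁻¹), ← div_div]
  · set T : ℝ := ∑' j : ℤ, ((q:ℝ))⁻¹ ^ (j*(j-1)).toNat with hT
    have hTpos : (0:ℝ) < T := by
      have h := Summable.le_tsum (Stmt19Aux.summable_odd hq2) 0 (fun j _ => by positivity)
      calc (0:ℝ) < 1 := one_pos
        _ ≤ T := by rw [hT]; simpa using h
    have hc : (0:ℝ) < (q:ℝ) ^ ((1:ℝ)/4) := Real.rpow_pos_of_pos (Stmt19Aux.hQ0 hq2) _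
    have h := (Stmt19Aux.odd_core (q := q) hq2).div_const T
    rw [← hT, div_self (ne_of_gt hTpos)] at h
    apply h.congr
    intro m
    rw [mul_comm (theta2 ((q:ℝ))⁻¹), ← div_div, Stmt19Aux.odd_sum hq2 m,
      Stmt19Aux.theta2_eq hq2, ← hT, Real.inv_rpow (Stmt19Aux.hQ0 hq2).le]
    field_simp
end
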